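/- arXiv:2109.09474 — 10 statements merged into one kernel-verified Lean document; each statement's English description precedes it below -/
import Mathlib

section
/- Let λ > 0 and let 𝒯 be a random variable whose law is the exponential distribution with rate λ (density λ e^{-λt} on [0,∞)). For every sampling interval T > 0 and every w with 0 ≤ w ≤ T, the wait time W = ⌈𝒯/T⌉·T − 𝒯 satisfies P(W ≤ w) = (e^{λw} − 1)/(e^{λT} − 1). -/
open MeasureTheory Real Set

namespace WaitAux

lemma expMeasure_apply {r : ℝ} {s : Set ℝ} (hs : MeasurableSet s) :
    ProbabilityTheory.expMeasure r s = ∫⁻ y in s, ProbabilityTheory.exponentialPDF r y := by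
  rw [ProbabilityTheory.expMeasure, ProbabilityTheory.gammaMeasure, withDensity_apply _ hs]
  rfl

lemma expMeasure_Iic {r : ℝ} (hr : 0 < r) (x : ℝ) :
    ProbabilityTheory.expMeasure r (Iic x)
      = ENNReal.ofReal (if 0 ≤ x then 1 - exp (-(r * x)) else 0) := by
  rw [expMeasure_apply measurableSet_Iic,
    ProbabilityTheory.lintegral_exponentialPDF_eq_antiDeriv hr x]

lemma expMeasure_singleton {r : ℝ} (a : ℝ) :
    ProbabilityTheory.expMeasure r {a} = 0 := by
  rw [expMeasure_apply (measurableSet_singleton a)]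
  exact setLIntegral_measure_zero _ _ (by simp)

lemma expMeasure_Ioc {r : ℝ} (hr : 0 < r) {a b : ℝ} (ha : 0 ≤ a) (hab : a ≤ b) :
    ProbabilityTheory.expMeasure r (Ioc a b)
      = ENNReal.ofReal (exp (-(r * a)) - exp (-(r * b))) := by
  have hb : 0 ≤ b := ha.trans hab
  have hfin : ProbabilityTheory.expMeasure r (Iic a) ≠ ⊤ := by
    have := ProbabilityTheory.isProbabilityMeasure_expMeasure hr
    exact measure_ne_top _ _
  have : Ioc a b = Iic b \ Iic a := by
    ext t; simp [mem_Iic, mem_Ioc, and_comm]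
  rw [this, measure_diff (Iic_subset_Iic.2 hab) measurableSet_Iic.nullMeasurableSet hfin,
    expMeasure_Iic hr, expMeasure_Iic hr, if_pos ha, if_pos hb,
    ← ENNReal.ofReal_sub _ (by
      have : exp (-(r * a)) ≤ 1 := exp_le_one_iff.2 (by nlinarith)
      linarith)]
  ring_nf

end WaitAux

/-- For an exponentially distributed time to event `𝒯` with rate `r > 0`, sampling interval
`T > 0`, and `0 ≤ w ≤ T`, the wait `W = ⌈𝒯/T⌉·T − 𝒯` satisfies
`P(W ≤ w) = (e^{rw} − 1)/(e^{rT} − 1)`. -/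
theorem wait_cdf_exponential (r T w : ℝ) (hr : 0 < r) (hT : 0 < T)
    (hw0 : 0 ≤ w) (hwT : w ≤ T) :
    ProbabilityTheory.expMeasure r {t : ℝ | ((⌈t / T⌉ : ℤ) : ℝ) * T - t ≤ w}
      = ENNReal.ofReal ((Real.exp (r * w) - 1) / (Real.exp (r * T) - 1)) := by
  set μ := ProbabilityTheory.expMeasure r with hμ
  set S : Set ℝ := {t : ℝ | ((⌈t / T⌉ : ℤ) : ℝ) * T - t ≤ w} with hS
  -- the pieces
  set f : ℕ → Set ℝ := fun k => Ioc ((k : ℝ) * T) (((k : ℝ) + 1) * T) ∩ Ici (((k : ℝ) + 1) * T - w)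
    with hf
  -- ceiling on each piece
  have hceil : ∀ (k : ℕ) (t : ℝ), t ∈ Ioc ((k : ℝ) * T) (((k : ℝ) + 1) * T) →
      (⌈t / T⌉ : ℤ) = (k : ℤ) + 1 := by
    intro k t ht
    rw [Int.ceil_eq_iff]
    constructor
    · push_cast
      have : (k : ℝ) * T < t := ht.1
      rw [show ((k : ℝ) + 1 - 1) = (k : ℝ) by ring]
      exact (lt_div_iff₀ hT).2 (by linarith [ht.1])
    · push_cast
      exact (div_le_iff₀ hT).2 (by linarith [ht.2])
  -- union of pieces is S ∩ Ioi 0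
  have hUnion : (⋃ k, f k) = S ∩ Ioi 0 := by
    ext t
    constructor
    · rintro ⟨_, ⟨k, rfl⟩, ht⟩
      obtain ⟨ht1, ht2⟩ := ht
      have hc := hceil k t ht1
      have hkT : (0 : ℝ) ≤ (k : ℝ) * T := by positivity
      refine ⟨?_, lt_of_le_of_lt hkT ht1.1⟩
      simp only [hS, mem_setOf_eq, hc]
      push_cast
      have : ((k : ℝ) + 1) * T - w ≤ t := ht2
      linarith
    · rintro ⟨ht, ht0⟩
      have hpos : 0 < t / T := div_pos ht0 hT
      have hn1 : 1 ≤ ⌈t / T⌉ := Int.ceil_pos.2 hpos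
      obtain ⟨k, hk⟩ : ∃ k : ℕ, ⌈t / T⌉ = (k : ℤ) + 1 := by
        refine ⟨(⌈t / T⌉ - 1).toNat, ?_⟩
        omega
      refine mem_iUnion.2 ⟨k, ?_, ?_⟩
      · constructor
        · have h1 : (⌈t / T⌉ : ℝ) < t / T + 1 := Int.ceil_lt_add_one _
          have h2 : ((k : ℝ) + 1) < t / T + 1 := by
            calc ((k : ℝ) + 1) = (((k : ℤ) + 1 : ℤ) : ℝ) := by push_cast; ring
            _ = (⌈t / T⌉ : ℝ) := by rw [hk]
            _ < t / T + 1 := h1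
          have : (k : ℝ) < t / T := by linarith
          exact (lt_div_iff₀ hT).1 this
        · have h1 : t / T ≤ (⌈t / T⌉ : ℝ) := Int.le_ceil _
          have h2 : t / T ≤ (k : ℝ) + 1 := by
            calc t / T ≤ (⌈t / T⌉ : ℝ) := h1
            _ = ((k : ℝ) + 1) := by rw [hk]; push_cast; ring
          calc t = (t / T) * T := by field_simp
          _ ≤ ((k : ℝ) + 1) * T := by nlinarith
      · have hSt : ((⌈t / T⌉ : ℤ) : ℝ) * T - t ≤ w := ht
        rw [hk] at hSt
        push_cast at hSt
        simp only [mem_Ici]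
        linarith
  -- measure of each piece
  have hfmeas : ∀ k, μ (f k) = ENNReal.ofReal
      ((exp (r * w) - 1) * exp (-(r * T)) ^ (k + 1)) := by
    intro k
    set a : ℝ := ((k : ℝ) + 1) * T - w with ha
    set b : ℝ := ((k : ℝ) + 1) * T with hb
    have hkTa : (k : ℝ) * T ≤ a := by
      simp only [ha]
      have : (k : ℝ) * T + w ≤ (k : ℝ) * T + T := by linarith
      nlinarith
    have ha0 : 0 ≤ a := le_trans (by positivity) hkTa
    have hab : a ≤ b := by simp only [ha, hb]; linarith
    have hIoc : μ (Ioc a b) = ENNReal.ofReal (exp (-(r * a)) - exp (-(r * b))) :=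
      WaitAux.expMeasure_Ioc hr ha0 hab
    have hval : exp (-(r * a)) - exp (-(r * b))
        = (exp (r * w) - 1) * exp (-(r * T)) ^ (k + 1) := by
      have hqpow : exp (-(r * T)) ^ (k + 1) = exp (-(r * b)) := by
        rw [← Real.exp_nat_mul]
        congr 1
        simp only [hb]
        push_cast
        ring
      rw [hqpow]
      have : exp (-(r * a)) = exp (r * w) * exp (-(r * b)) := by
        rw [← Real.exp_add]
        congr 1
        simp only [ha, hb]
        ring
      rw [this]
      ring
    -- squeeze between Ioc a b and Icc a b
    have hle1 : μ (Ioc a b) ≤ μ (f k) := by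
      apply measure_mono
      intro t ht
      exact ⟨⟨lt_of_le_of_lt hkTa ht.1, ht.2⟩, le_of_lt ht.1⟩
    have hle2 : μ (f k) ≤ μ (Ioc a b) := by
      have hsub : f k ⊆ insert a (Ioc a b) := by
        intro t ht
        obtain ⟨⟨_, ht2⟩, ht3⟩ := ht
        rcases eq_or_lt_of_le (show a ≤ t from ht3) with h | h
        · exact Or.inl h.symm
        · exact Or.inr ⟨h, ht2⟩
      calc μ (f k) ≤ μ (insert a (Ioc a b)) := measure_mono hsub
      _ ≤ μ {a} + μ (Ioc a b) := by
          rw [show insert a (Ioc a b) = {a} ∪ Ioc a b from rfl]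
          exact measure_union_le _ _
      _ = μ (Ioc a b) := by rw [WaitAux.expMeasure_singleton, zero_add]
    rw [le_antisymm hle2 hle1, hIoc, hval]
  -- pieces are measurable and pairwise disjoint
  have hfm : ∀ k, MeasurableSet (f k) := fun k => measurableSet_Ioc.inter measurableSet_Ici
  have hdisj : Pairwise (Function.onFun Disjoint f) := by
    have key : ∀ i j : ℕ, i < j → Disjoint (f i) (f j) := by
      intro i j hij
      rw [Set.disjoint_left]
      rintro t ⟨⟨_, hti⟩, _⟩ ⟨⟨htj, _⟩, _⟩
      have h1 : ((i : ℝ) + 1) * T ≤ (j : ℝ) * T := by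
        have : ((i : ℝ) + 1) ≤ (j : ℝ) := by exact_mod_cast hij
        nlinarith
      linarith
    intro i j hij
    rcases hij.lt_or_gt with h | h
    · exact key i j h
    · exact (key j i h).symm
  -- μ S = μ (⋃ f k)
  have hIic0 : μ (Iic 0) = 0 := by
    rw [hμ, WaitAux.expMeasure_Iic hr, if_pos le_rfl]
    simp
  have hμS : μ S = μ (⋃ k, f k) := by
    apply le_antisymm
    · calc μ S ≤ μ ((⋃ k, f k) ∪ Iic 0) := by
            apply measure_mono
            intro t ht
            rcases le_or_gt t 0 with h | h
            · exact Or.inr h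
            · exact Or.inl (hUnion ▸ ⟨ht, h⟩)
      _ ≤ μ (⋃ k, f k) + μ (Iic 0) := measure_union_le _ _
      _ = μ (⋃ k, f k) := by rw [hIic0, add_zero]
    · apply measure_mono
      rw [hUnion]
      exact inter_subset_left
  -- compute the sum
  have hq0 : (0 : ℝ) ≤ exp (-(r * T)) := (exp_pos _).le
  have hq1 : exp (-(r * T)) < 1 := by
    rw [exp_lt_one_iff]
    nlinarith
  have hc0 : 0 ≤ exp (r * w) - 1 := by
    have : (1 : ℝ) ≤ exp (r * w) := one_le_exp (by positivity)
    linarith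
  have hsummable : Summable (fun k : ℕ => (exp (r * w) - 1) * exp (-(r * T)) ^ (k + 1)) := by
    have : (fun k : ℕ => (exp (r * w) - 1) * exp (-(r * T)) ^ (k + 1))
        = fun k : ℕ => ((exp (r * w) - 1) * exp (-(r * T))) * exp (-(r * T)) ^ k := by
      funext k; ring
    rw [this]
    exact (summable_geometric_of_lt_one hq0 hq1).mul_left _
  rw [hμS, measure_iUnion hdisj hfm]
  simp_rw [hfmeas]
  rw [← ENNReal.ofReal_tsum_of_nonneg (fun k => by positivity) hsummable]
  congr 1
  have htsum : ∑' k : ℕ, (exp (r * w) - 1) * exp (-(r * T)) ^ (k + 1)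
      = ((exp (r * w) - 1) * exp (-(r * T))) * (1 - exp (-(r * T)))⁻¹ := by
    have heq : (fun k : ℕ => (exp (r * w) - 1) * exp (-(r * T)) ^ (k + 1))
        = fun k : ℕ => ((exp (r * w) - 1) * exp (-(r * T))) * exp (-(r * T)) ^ k := by
      funext k; ring
    rw [heq, tsum_mul_left, tsum_geometric_of_lt_one hq0 hq1]
  rw [htsum]
  have hE1 : 1 < exp (r * T) := one_lt_exp_iff.2 (by positivity)
  have hprod : exp (-(r * T)) * exp (r * T) = 1 := by
    rw [← Real.exp_add]; simp
  have h1q : (0:ℝ) < 1 - exp (-(r * T)) := by linarith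
  have hE1' : (0:ℝ) < exp (r * T) - 1 := by linarith
  rw [inv_eq_one_div, mul_comm]
  field_simp
  nlinarith [hprod, hc0]
end

section
/- Let λ > 0 and let 𝒯 be a random variable whose law is the exponential distribution with rate λ (density λ e^{-λt} on [0,∞)). For every sampling interval T > 0, the expected wait time satisfies E[⌈𝒯/T⌉·T − 𝒯] = (e^{-λT} + λT − 1)/(λ(1 − e^{-λT})). -/
open MeasureTheory Real

open Set
open scoped ENNReal NNReal

/-- For an exponentially distributed time to event `𝒯` with rate `r > 0` and any sampling
interval `T > 0`, the expected wait `E[⌈𝒯/T⌉·T − 𝒯]` equals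
`(e^{-rT} + rT − 1)/(r(1 − e^{-rT}))`. -/
theorem expected_wait_exponential (r T : ℝ) (hr : 0 < r) (hT : 0 < T) :
    ∫ t, (((⌈t / T⌉ : ℤ) : ℝ) * T - t) ∂(ProbabilityTheory.expMeasure r)
      = (Real.exp (-(r * T)) + r * T - 1) / (r * (1 - Real.exp (-(r * T)))) := by
  set q : ℝ := Real.exp (-(r * T)) with hq
  have hq0 : 0 < q := Real.exp_pos _
  have hq1 : q < 1 := by
    rw [hq, Real.exp_lt_one_iff]
    nlinarith
  set g : ℝ → ℝ := fun t => (((⌈t / T⌉ : ℤ) : ℝ) * T - t) with hg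
  have hgmeas : Measurable g := by
    exact ((measurable_from_top.comp (measurable_id.div_const T).ceil).mul_const T).sub
      measurable_id
  -- bound on g for t in Ioi 0 (in fact everywhere)
  have hg_bound : ∀ t : ℝ, 0 ≤ g t ∧ g t ≤ T := by
    intro t
    have h1 : t / T ≤ (⌈t / T⌉ : ℝ) := Int.le_ceil _
    have h2 : (⌈t / T⌉ : ℝ) < t / T + 1 := Int.ceil_lt_add_one _
    constructor
    · have := (div_le_iff₀ hT).mp h1
      simp only [hg]; nlinarith
    · have : (⌈t / T⌉ : ℝ) * T < (t / T + 1) * T := by nlinarith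
      have ht : (t / T) * T = t := div_mul_cancel₀ t hT.ne'
      simp only [hg]; nlinarith
  -- Step 1: reduce to a Lebesgue integral on Ioi 0
  have step1 : ∫ t, g t ∂(ProbabilityTheory.expMeasure r)
      = ∫ t in Ioi 0, g t * (r * Real.exp (-(r * t))) := by
    have hd : (ProbabilityTheory.expMeasure r)
        = volume.withDensity (fun x => ((ProbabilityTheory.exponentialPDFReal r x).toNNReal : ℝ≥0∞)) := by
      rfl
    rw [hd, integral_withDensity_eq_integral_smul
      ((ProbabilityTheory.measurable_exponentialPDFReal r).real_toNNReal) g]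
    have : ∀ x : ℝ, ((ProbabilityTheory.exponentialPDFReal r x).toNNReal : ℝ≥0) • g x
        = ProbabilityTheory.exponentialPDFReal r x * g x := by
      intro x
      rw [NNReal.smul_def, smul_eq_mul, Real.coe_toNNReal _ (ProbabilityTheory.exponentialPDFReal_nonneg hr x)]
    simp_rw [this]
    rw [← setIntegral_eq_integral_of_forall_compl_eq_zero (s := Ioi 0)]
    · apply setIntegral_congr_fun measurableSet_Ioi
      intro x hx
      have h2 : ProbabilityTheory.exponentialPDFReal r x = r * Real.exp (-(r * x)) := by
        simp [ProbabilityTheory.exponentialPDFReal, ProbabilityTheory.gammaPDFReal, le_of_lt (mem_Ioi.mp hx), not_lt.mpr (le_of_lt (mem_Ioi.mp hx))]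
      show ProbabilityTheory.exponentialPDFReal r x * g x = g x * (r * Real.exp (-(r * x)))
      rw [h2]; ring
    · intro x hx
      simp only [mem_Ioi, not_lt] at hx
      rcases lt_or_eq_of_le hx with h | h
      · have : ProbabilityTheory.exponentialPDFReal r x = 0 := by
          simp [ProbabilityTheory.exponentialPDFReal, ProbabilityTheory.gammaPDFReal, not_le.mpr h]
        rw [this, zero_mul]
      · subst h
        have : g 0 = 0 := by simp [hg]
        rw [this, mul_zero]
  rw [step1]
  set h : ℝ → ℝ := fun t => g t * (r * Real.exp (-(r * t))) with hh
  have hUnion : (⋃ k : ℕ, Ioc ((k : ℝ) * T) (((k : ℝ) + 1) * T)) = Ioi 0 := by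
    ext x
    simp only [mem_iUnion, mem_Ioc, mem_Ioi]
    constructor
    · rintro ⟨k, hk1, hk2⟩
      have : (0 : ℝ) ≤ (k : ℝ) * T := by positivity
      linarith
    · intro hx
      have hc1 : (0 : ℤ) < ⌈x / T⌉ := Int.ceil_pos.mpr (div_pos hx hT)
      refine ⟨(⌈x / T⌉ - 1).toNat, ?_, ?_⟩
      · have hcast : (((⌈x / T⌉ - 1).toNat : ℤ) : ℝ) = (⌈x / T⌉ : ℝ) - 1 := by
          rw [Int.toNat_of_nonneg (by omega)]; push_cast; ring
        rw [← Int.cast_natCast, hcast]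
        have h2 : (⌈x / T⌉ : ℝ) < x / T + 1 := Int.ceil_lt_add_one _
        have h3 : (⌈x / T⌉ : ℝ) - 1 < x / T := by linarith
        calc ((⌈x / T⌉ : ℝ) - 1) * T < (x / T) * T := by nlinarith
          _ = x := div_mul_cancel₀ x hT.ne'
      · have hcast : (((⌈x / T⌉ - 1).toNat : ℤ) : ℝ) = (⌈x / T⌉ : ℝ) - 1 := by
          rw [Int.toNat_of_nonneg (by omega)]; push_cast; ring
        rw [← Int.cast_natCast, hcast]
        have h1 : x / T ≤ (⌈x / T⌉ : ℝ) := Int.le_ceil _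
        calc x = (x / T) * T := (div_mul_cancel₀ x hT.ne').symm
          _ ≤ (⌈x / T⌉ : ℝ) * T := by nlinarith
          _ = ((⌈x / T⌉ : ℝ) - 1 + 1) * T := by ring
  have hhmeas : Measurable h :=
    hgmeas.mul ((measurable_id.const_mul r).neg.exp.const_mul r)
  have hexpInt : IntegrableOn (fun t => T * (r * Real.exp (-(r * t)))) (Ioi (0:ℝ)) := by
    have := exp_neg_integrableOn_Ioi (0:ℝ) hr
    simp_rw [neg_mul] at this
    exact (this.const_mul r).const_mul T
  have hInt : IntegrableOn h (Ioi (0:ℝ)) := by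
    refine Integrable.mono hexpInt hhmeas.aestronglyMeasurable ?_
    filter_upwards with t
    have hb := hg_bound t
    have he : (0:ℝ) < r * Real.exp (-(r * t)) := by positivity
    show |g t * (r * Real.exp (-(r * t)))| ≤ |T * (r * Real.exp (-(r * t)))|
    rw [abs_of_nonneg (mul_nonneg hb.1 he.le), abs_of_nonneg (by positivity)]
    exact mul_le_mul_of_nonneg_right hb.2 he.le
  have hdisj : Pairwise (Function.onFun Disjoint
      (fun k : ℕ => Ioc ((k : ℝ) * T) (((k : ℝ) + 1) * T))) := by
    intro i j hij
    simp only [Function.onFun]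
    rw [Set.Ioc_disjoint_Ioc]
    rcases hij.lt_or_gt with h' | h'
    · have : (i : ℝ) + 1 ≤ (j : ℝ) := by exact_mod_cast h'
      exact le_trans (min_le_left _ _) (le_max_of_le_right (by nlinarith))
    · have : (j : ℝ) + 1 ≤ (i : ℝ) := by exact_mod_cast h'
      exact le_trans (min_le_right _ _) (le_max_of_le_left (by nlinarith))
  have step2 : ∫ t in Ioi (0:ℝ), h t
      = ∑' k : ℕ, ∫ t in Ioc ((k : ℝ) * T) (((k : ℝ) + 1) * T), h t := by
    rw [← hUnion] at hInt ⊢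
    exact integral_iUnion (fun k => measurableSet_Ioc) hdisj hInt
  have term : ∀ k : ℕ, ∫ t in Ioc ((k : ℝ) * T) (((k : ℝ) + 1) * T), h t
      = (T - 1/r + q/r) * q ^ k := by
    intro k
    set a : ℝ := (k : ℝ) * T with ha
    set b : ℝ := ((k : ℝ) + 1) * T with hb
    have hab : a ≤ b := by nlinarith
    have hceil : ∀ t ∈ Ioc a b, (⌈t / T⌉ : ℤ) = (k : ℤ) + 1 := by
      intro t ht
      rw [Int.ceil_eq_iff]
      constructor
      · push_cast
        rw [lt_div_iff₀ hT]
        have := ht.1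
        simp only [ha] at this
        linarith
      · push_cast
        rw [div_le_iff₀ hT]
        have := ht.2
        simp only [hb] at this
        linarith
    have hcongr : ∫ t in Ioc a b, h t
        = ∫ t in Ioc a b, (b - t) * (r * Real.exp (-(r * t))) := by
      apply setIntegral_congr_fun measurableSet_Ioc
      intro t ht
      show g t * (r * Real.exp (-(r * t))) = (b - t) * (r * Real.exp (-(r * t)))
      have : g t = b - t := by
        simp only [hg, hceil t ht]
        push_cast
        simp only [hb]
        try ring
      rw [this]
    rw [hcongr, ← intervalIntegral.integral_of_le hab]
    have hFTC : ∫ t in a..b, (b - t) * (r * Real.exp (-(r * t)))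
        = ((b - b) * Real.exp (-(r * b)) + Real.exp (-(r * b)) / r)
          - ((a - b) * Real.exp (-(r * a)) + Real.exp (-(r * a)) / r) := by
      have hderiv : ∀ x ∈ uIcc a b, HasDerivAt
          (fun t => (t - b) * Real.exp (-(r * t)) + Real.exp (-(r * t)) / r)
          ((b - x) * (r * Real.exp (-(r * x)))) x := by
        intro x _
        have h1 : HasDerivAt (fun t : ℝ => -(r * t)) (-r) x := by
          exact (((hasDerivAt_id x).const_mul r).neg).congr_deriv (by ring)
        have he : HasDerivAt (fun t : ℝ => Real.exp (-(r * t)))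
            (Real.exp (-(r * x)) * (-r)) x := (Real.hasDerivAt_exp _).comp x h1
        have h2 : HasDerivAt (fun t : ℝ => t - b) 1 x := (hasDerivAt_id x).sub_const b
        have h3 := (h2.mul he).add (he.div_const r)
        exact h3.congr_deriv (by rw [mul_neg, neg_div, mul_div_cancel_right₀ _ hr.ne']; ring)
      rw [intervalIntegral.integral_eq_sub_of_hasDerivAt hderiv
        (((continuous_const.sub continuous_id).mul
          (continuous_const.mul ((continuous_const.mul continuous_id).neg.rexp))).intervalIntegrable a b)]
    rw [hFTC]
    have e1 : Real.exp (-(r * a)) = q ^ k := by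
      rw [hq, ← Real.exp_nat_mul]
      congr 1
      simp only [ha]; push_cast; ring
    have e2 : Real.exp (-(r * b)) = q ^ (k + 1) := by
      rw [hq, ← Real.exp_nat_mul]
      congr 1
      simp only [hb]; push_cast; ring
    have hab' : a - b = -T := by simp only [ha, hb]; ring
    rw [e1, e2, hab', pow_succ]
    field_simp
    ring
  rw [step2, tsum_congr term, tsum_mul_left, tsum_geometric_of_lt_one hq0.le hq1]
  have h1q : (1 : ℝ) - q ≠ 0 := by linarith
  field_simp
  ring
end

section
/- Let λ > 0, α ≥ 0, β ≥ 0, and let 𝒯 be a random variable whose law is the exponential distribution with rate λ (density λ e^{-λt} on [0,∞)). For every sampling interval T > 0, the energy penalty satisfies α·E[⌈𝒯/T⌉] + β·E[⌈𝒯/T⌉·T − 𝒯] = (αλ + β(e^{-λT} + λT − 1))/(λ(1 − e^{-λT})). -/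
open MeasureTheory Real Set ProbabilityTheory
open scoped ENNReal NNReal

namespace EnergyPenaltyAux

lemma slice_int {r : ℝ} {a b : ℝ} (hab : a ≤ b) :
    ∫ t in Set.Ioc a b, r * rexp (-(r*t)) = rexp (-(r*a)) - rexp (-(r*b)) := by
  rw [← intervalIntegral.integral_of_le hab]
  have h := intervalIntegral.integral_eq_sub_of_hasDerivAt
    (f := fun x => -rexp (-(r*x))) (f' := fun x => r * rexp (-(r*x)))
    (fun x _ => hasDerivAt_neg_exp_mul_exp)
    (Continuous.intervalIntegrable (by continuity) a b)
  rw [h]; ring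

lemma union_slices {T : ℝ} (hT : 0 < T) :
    Set.Ioi (0:ℝ) = ⋃ k : ℕ, Set.Ioc ((k:ℝ)*T) (((k:ℝ)+1)*T) := by
  ext x
  simp only [mem_Ioi, mem_iUnion, mem_Ioc]
  constructor
  · intro hx
    refine ⟨(⌈x/T⌉ - 1).toNat, ?_, ?_⟩
    · have h1 : (1:ℤ) ≤ ⌈x/T⌉ := by
        rw [Int.le_ceil_iff]; simpa using div_pos hx hT
      have h2 : ((⌈x/T⌉ - 1).toNat : ℝ) = (⌈x/T⌉:ℝ) - 1 := by
        exact_mod_cast Int.toNat_of_nonneg (by omega)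
      rw [h2]
      calc ((⌈x/T⌉:ℝ) - 1) * T < (x/T) * T := by
            nlinarith [Int.ceil_lt_add_one (x/T)]
        _ = x := by field_simp
    · have h1 : (1:ℤ) ≤ ⌈x/T⌉ := by
        rw [Int.le_ceil_iff]; simpa using div_pos hx hT
      have h2 : ((⌈x/T⌉ - 1).toNat : ℝ) = (⌈x/T⌉:ℝ) - 1 := by
        exact_mod_cast Int.toNat_of_nonneg (by omega)
      rw [h2]
      calc x = (x/T)*T := by field_simp
        _ ≤ (⌈x/T⌉:ℝ)*T := by nlinarith [Int.le_ceil (x/T)]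
        _ = ((⌈x/T⌉:ℝ) - 1 + 1) * T := by ring
  · rintro ⟨k, h1, h2⟩
    have : (0:ℝ) ≤ (k:ℝ)*T := by positivity
    linarith

lemma disj_slices {T : ℝ} (hT : 0 < T) :
    Pairwise (Function.onFun Disjoint fun k : ℕ => Set.Ioc ((k:ℝ)*T) (((k:ℝ)+1)*T)) := by
  intro i j hij
  rcases hij.lt_or_gt with h | h
  · apply Set.Ioc_disjoint_Ioc.mpr
    have : ((i:ℝ)+1)*T ≤ (j:ℝ)*T := by
      have : ((i:ℝ)+1) ≤ (j:ℝ) := by exact_mod_cast h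
      nlinarith
    simp [min_le_iff, le_max_iff]; right; left; linarith
  · apply Set.Ioc_disjoint_Ioc.mpr
    have : ((j:ℝ)+1)*T ≤ (i:ℝ)*T := by
      have : ((j:ℝ)+1) ≤ (i:ℝ) := by exact_mod_cast h
      nlinarith
    simp [min_le_iff, le_max_iff]; left; right; linarith

lemma lint_Ioi {r : ℝ} (f : ℝ → ℝ≥0∞) (hf : Measurable f) :
    ∫⁻ t, f t ∂(expMeasure r)
      = ∫⁻ t in Set.Ioi (0:ℝ), f t * ENNReal.ofReal (r * rexp (-(r*t))) := by
  have hpdf : Measurable (exponentialPDF r) :=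
    ENNReal.measurable_ofReal.comp (measurable_exponentialPDFReal r)
  rw [show expMeasure r = volume.withDensity (exponentialPDF r) from rfl,
    lintegral_withDensity_eq_lintegral_mul _ hpdf hf]
  rw [← lintegral_add_compl (fun t => (exponentialPDF r * f) t) (measurableSet_Ioi (a := (0:ℝ)))]
  have h2 : ∫⁻ t in (Set.Ioi (0:ℝ))ᶜ, (exponentialPDF r * f) t = 0 := by
    rw [Set.compl_Ioi]
    rw [lintegral_congr_ae (g := 0)]
    · simp
    have h0 : ∀ᵐ (t:ℝ) ∂(volume.restrict (Set.Iic 0)), t ≠ 0 := by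
      refine ae_restrict_of_ae ?_
      have : volume ({(0:ℝ)} : Set ℝ) = 0 := measure_singleton 0
      filter_upwards [measure_eq_zero_iff_ae_notMem.mp this] with t ht
      simpa using ht
    filter_upwards [h0, ae_restrict_mem measurableSet_Iic] with t ht hmem
    have : t < 0 := lt_of_le_of_ne hmem ht
    simp [exponentialPDF_of_neg this]
  rw [h2, add_zero]
  refine setLIntegral_congr_fun measurableSet_Ioi (fun t ht => ?_)
  simp only [Pi.mul_apply, exponentialPDF_of_nonneg (le_of_lt ht)]
  ring

lemma lint_decomp {r T : ℝ} (hT : 0 < T) (f : ℝ → ℝ≥0∞) (hf : Measurable f) :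
    ∫⁻ t, f t ∂(expMeasure r)
      = ∑' k : ℕ, ∫⁻ t in Set.Ioc ((k:ℝ)*T) (((k:ℝ)+1)*T),
          f t * ENNReal.ofReal (r * rexp (-(r*t))) := by
  rw [lint_Ioi f hf, union_slices hT,
    lintegral_iUnion (fun k => measurableSet_Ioc) (disj_slices hT)]

lemma ceil_on_slice {T : ℝ} (hT : 0 < T) {k : ℕ} {t : ℝ}
    (ht : t ∈ Set.Ioc ((k:ℝ)*T) (((k:ℝ)+1)*T)) : ⌈t/T⌉ = (k:ℤ) + 1 := by
  obtain ⟨h1, h2⟩ := ht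
  rw [Int.ceil_eq_iff]
  constructor
  · push_cast
    rw [lt_div_iff₀ hT]
    nlinarith
  · rw [div_le_iff₀ hT]
    push_cast
    nlinarith

lemma exp_slice {r T : ℝ} (k : ℕ) : rexp (-(r*((k:ℝ)*T))) = rexp (-(r*T))^k := by
  rw [← Real.exp_nat_mul]; ring_nf

lemma slice_val {r T : ℝ} (hr : 0 < r) (hT : 0 < T) (k : ℕ) :
    ∫⁻ t in Set.Ioc ((k:ℝ)*T) (((k:ℝ)+1)*T),
        ENNReal.ofReal ((⌈t/T⌉:ℤ):ℝ) * ENNReal.ofReal (r * rexp (-(r*t)))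
      = ENNReal.ofReal (((k:ℝ)+1) * (rexp (-(r*T))^k - rexp (-(r*T))^(k+1))) := by
  have hle : (k:ℝ)*T ≤ ((k:ℝ)+1)*T := by nlinarith
  rw [setLIntegral_congr_fun measurableSet_Ioc (id
    (fun t ht => by rw [ceil_on_slice hT ht] :
      ∀ t ∈ Set.Ioc ((k:ℝ)*T) (((k:ℝ)+1)*T),
        ENNReal.ofReal ((⌈t/T⌉:ℤ):ℝ) * ENNReal.ofReal (r * rexp (-(r*t)))
        = ENNReal.ofReal (((k:ℤ)+1:ℤ):ℝ) * ENNReal.ofReal (r * rexp (-(r*t)))))]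
  rw [lintegral_const_mul _ (by fun_prop)]
  rw [← ofReal_integral_eq_lintegral_ofReal]
  · rw [slice_int hle, ← ENNReal.ofReal_mul (by positivity)]
    congr 1
    rw [exp_slice]
    have h5 : rexp (-(r*(((k:ℝ)+1)*T))) = rexp (-(r*T))^(k+1) := by
      have := exp_slice (r := r) (T := T) (k+1)
      push_cast at this ⊢
      convert this using 3
    rw [h5]
    push_cast
    ring
  · exact (Continuous.integrableOn_Ioc (by continuity))
  · exact ae_of_all _ fun t => by positivity

lemma hasSum_val {q : ℝ} (hq0 : 0 ≤ q) (hq1 : q < 1) :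
    HasSum (fun k : ℕ => ((k:ℝ)+1) * (q^k - q^(k+1))) (1/(1-q)) := by
  have hnorm : ‖q‖ < 1 := by rw [Real.norm_eq_abs, abs_lt]; constructor <;> linarith
  have h1 := hasSum_coe_mul_geometric_of_norm_lt_one (r := q) hnorm
  have h2 := hasSum_geometric_of_norm_lt_one (ξ := q) hnorm
  have h1q : (1:ℝ) - q ≠ 0 := by linarith
  have h3 := (h1.add h2).mul_left (1-q)
  have hfun : (fun k : ℕ => (1-q) * ((k:ℝ)*q^k + q^k))
      = fun k : ℕ => ((k:ℝ)+1) * (q^k - q^(k+1)) := by funext k; ring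
  rw [hfun] at h3
  have hval : (1-q) * (q/(1-q)^2 + (1-q)⁻¹) = 1/(1-q) := by
    rw [div_add' _ _ _ (pow_ne_zero 2 h1q), sq, inv_mul_cancel_left₀ h1q,
      show q + (1-q) = 1 by ring, one_div, mul_inv, ← mul_assoc,
      mul_inv_cancel₀ h1q, one_mul, one_div]
  rwa [hval] at h3

lemma mean_exp {r : ℝ} (hr : 0 < r) :
    ∫ t in Set.Ioi (0:ℝ), t * (r * rexp (-(r*t))) = 1/r := by
  have h := integral_rpow_mul_exp_neg_mul_Ioi (a := 2) (by norm_num) hr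
  rw [Real.Gamma_two] at h
  have heq : ∫ t in Set.Ioi (0:ℝ), t * (r * rexp (-(r*t)))
      = r * ∫ t in Set.Ioi (0:ℝ), t ^ ((2:ℝ)-1) * rexp (-(r*t)) := by
    rw [← integral_const_mul]
    refine setIntegral_congr_fun measurableSet_Ioi fun t ht => ?_
    rw [show ((2:ℝ)-1) = 1 by norm_num, Real.rpow_one]
    ring
  rw [heq, h]
  rw [show ((1:ℝ)/r)^(2:ℝ) = (1/r)^(2:ℕ) by rw [← Real.rpow_natCast]; norm_num]
  field_simp

lemma mean_integrable {r : ℝ} (hr : 0 < r) :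
    IntegrableOn (fun t : ℝ => t * (r * rexp (-(r*t)))) (Set.Ioi 0) := by
  have h := integrableOn_rpow_mul_exp_neg_mul_rpow (p := 1) (s := 1) (b := r)
    (by norm_num) one_pos hr
  refine (show IntegrableOn _ _ _ from h.const_mul r).congr_fun
    (fun t ht => ?_) measurableSet_Ioi
  beta_reduce
  rw [Real.rpow_one]
  ring

lemma meas_ceil {T : ℝ} : Measurable (fun t : ℝ => ((⌈t/T⌉:ℤ):ℝ)) :=
  measurable_from_top.comp (measurable_id.div_const T).ceil

lemma ae_pos {r : ℝ} : ∀ᵐ t ∂(expMeasure r), 0 < t := by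
  rw [ae_iff]
  have hset : {t : ℝ | ¬ 0 < t} = Set.Iic 0 := by ext t; simp
  rw [hset, show expMeasure r = volume.withDensity (exponentialPDF r) from rfl,
    withDensity_apply _ measurableSet_Iic]
  rw [lintegral_Iic_eq_lintegral_Iio_add_Icc _ le_rfl,
    lintegral_exponentialPDF_of_nonpos le_rfl, zero_add]
  rw [Set.Icc_self, setLIntegral_measure_zero _ _ (measure_singleton 0)]

lemma lint_ceil {r T : ℝ} (hr : 0 < r) (hT : 0 < T) :
    ∫⁻ t, ENNReal.ofReal ((⌈t/T⌉:ℤ):ℝ) ∂(expMeasure r)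
      = ENNReal.ofReal (1/(1 - rexp (-(r*T)))) := by
  set q := rexp (-(r*T)) with hq
  have hq0 : 0 ≤ q := le_of_lt (exp_pos _)
  have hq1 : q < 1 := by
    rw [hq, exp_lt_one_iff]
    nlinarith
  rw [lint_decomp hT (fun t => ENNReal.ofReal ((⌈t/T⌉:ℤ):ℝ))
    (by exact ENNReal.measurable_ofReal.comp meas_ceil)]
  have hs := hasSum_val hq0 hq1
  calc ∑' k : ℕ, ∫⁻ t in Set.Ioc ((k:ℝ)*T) (((k:ℝ)+1)*T),
        ENNReal.ofReal ((⌈t/T⌉:ℤ):ℝ) * ENNReal.ofReal (r * rexp (-(r*t)))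
      = ∑' k : ℕ, ENNReal.ofReal (((k:ℝ)+1) * (q^k - q^(k+1))) := by
        exact tsum_congr fun k => slice_val hr hT k
    _ = ENNReal.ofReal (∑' k : ℕ, ((k:ℝ)+1) * (q^k - q^(k+1))) := by
        refine (ENNReal.ofReal_tsum_of_nonneg (fun k => ?_) hs.summable).symm
        have : q^(k+1) ≤ q^k := pow_le_pow_of_le_one hq0 (le_of_lt hq1) (by omega)
        nlinarith [pow_nonneg hq0 k]
    _ = ENNReal.ofReal (1/(1-q)) := by rw [hs.tsum_eq]

lemma lint_id {r : ℝ} (hr : 0 < r) :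
    ∫⁻ t, ENNReal.ofReal t ∂(expMeasure r) = ENNReal.ofReal (1/r) := by
  rw [lint_Ioi _ ENNReal.measurable_ofReal]
  have h1 : ∫⁻ t in Set.Ioi (0:ℝ), ENNReal.ofReal t * ENNReal.ofReal (r * rexp (-(r*t)))
      = ∫⁻ t in Set.Ioi (0:ℝ), ENNReal.ofReal (t * (r * rexp (-(r*t)))) := by
    refine setLIntegral_congr_fun measurableSet_Ioi (fun t ht => ?_)
    rw [ENNReal.ofReal_mul (le_of_lt ht)]
  rw [h1, ← ofReal_integral_eq_lintegral_ofReal (mean_integrable hr)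
    (ae_restrict_of_ae_restrict_of_subset (Set.Subset.refl _)
      ((ae_restrict_iff' measurableSet_Ioi).mpr (ae_of_all _ fun t ht => by
        have h0t := mem_Ioi.mp ht; positivity))),
    mean_exp hr]

end EnergyPenaltyAux

open EnergyPenaltyAux

/-- For an exponentially distributed time to event `𝒯` with rate `r > 0`, sampling interval
`T > 0`, and weights `α ≥ 0`, `β ≥ 0`, the energy penalty
`α·E[⌈𝒯/T⌉] + β·E[⌈𝒯/T⌉·T − 𝒯]` equals `(αr + β(e^{-rT} + rT − 1))/(r(1 − e^{-rT}))`. -/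
theorem energy_penalty_exponential (r T α β : ℝ) (hr : 0 < r) (hT : 0 < T)
    (hα : 0 ≤ α) (hβ : 0 ≤ β) :
    α * (∫ t, ((⌈t / T⌉ : ℤ) : ℝ) ∂(ProbabilityTheory.expMeasure r))
      + β * (∫ t, (((⌈t / T⌉ : ℤ) : ℝ) * T - t) ∂(ProbabilityTheory.expMeasure r))
      = (α * r + β * (Real.exp (-(r * T)) + r * T - 1)) / (r * (1 - Real.exp (-(r * T)))) := by
  set μ := ProbabilityTheory.expMeasure r with hμ
  set q := rexp (-(r*T)) with hq
  have hq0 : 0 ≤ q := le_of_lt (exp_pos _)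
  have hq1 : q < 1 := by rw [hq, exp_lt_one_iff]; nlinarith
  have h1q : (0:ℝ) < 1 - q := by linarith
  have hae : ∀ᵐ t ∂μ, (0:ℝ) ≤ ((⌈t/T⌉:ℤ):ℝ) := by
    filter_upwards [ae_pos (r := r)] with t ht
    have : (0:ℤ) ≤ ⌈t/T⌉ := Int.ceil_nonneg (by positivity)
    exact_mod_cast this
  have haet : ∀ᵐ t ∂μ, (0:ℝ) ≤ t := by
    filter_upwards [ae_pos (r := r)] with t ht using le_of_lt ht
  -- value of E[ceil]
  have hEceil : ∫ t, ((⌈t/T⌉:ℤ):ℝ) ∂μ = 1/(1-q) := by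
    rw [integral_eq_lintegral_of_nonneg_ae hae (meas_ceil.aestronglyMeasurable)]
    rw [lint_ceil hr hT, ENNReal.toReal_ofReal (by positivity)]
  have hEt : ∫ t, t ∂μ = 1/r := by
    rw [integral_eq_lintegral_of_nonneg_ae haet measurable_id.aestronglyMeasurable]
    rw [lint_id hr, ENNReal.toReal_ofReal (by positivity)]
  -- integrability
  have hIceil : Integrable (fun t : ℝ => ((⌈t/T⌉:ℤ):ℝ)) μ := by
    refine ⟨meas_ceil.aestronglyMeasurable, ?_⟩
    rw [hasFiniteIntegral_iff_ofReal hae, lint_ceil hr hT]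
    exact ENNReal.ofReal_lt_top
  have hIt : Integrable (fun t : ℝ => t) μ := by
    refine ⟨measurable_id.aestronglyMeasurable, ?_⟩
    rw [hasFiniteIntegral_iff_ofReal haet, lint_id hr]
    exact ENNReal.ofReal_lt_top
  have hsplit : ∫ t, (((⌈t/T⌉:ℤ):ℝ) * T - t) ∂μ
      = (∫ t, ((⌈t/T⌉:ℤ):ℝ) ∂μ) * T - ∫ t, t ∂μ := by
    rw [integral_sub (hIceil.mul_const T) hIt, integral_mul_const]
  rw [hsplit, hEceil, hEt]
  have hrne : r ≠ 0 := ne_of_gt hr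
  have h1qne : (1:ℝ) - q ≠ 0 := ne_of_gt h1q
  field_simp
  ring
end

section
/- Let λ > 0, α ≥ 0 and β > 0. The function ℰ(T) = (αλ + β(e^{-λT} + λT − 1))/(λ(1 − e^{-λT})) is convex on the interval (0, ∞). -/
open Real

lemma key_ineq : ∀ x : ℝ, 0 ≤ x → 2 * (1 - Real.exp (-x)) ≤ x * (1 + Real.exp (-x)) := by
  have hmono : Monotone (fun x : ℝ => x * (1 + Real.exp (-x)) - 2 * (1 - Real.exp (-x))) := by
    apply monotone_of_deriv_nonneg
    · fun_prop
    · intro x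
      have h1 : HasDerivAt (fun x : ℝ => Real.exp (-x)) (-Real.exp (-x)) x := by
        simpa using ((hasDerivAt_id x).neg).exp
      have h : HasDerivAt (fun x : ℝ => x * (1 + Real.exp (-x)) - 2 * (1 - Real.exp (-x)))
          (1 * (1 + Real.exp (-x)) + x * -Real.exp (-x) - 2 * (0 - -Real.exp (-x))) x := by
        simpa using (((hasDerivAt_id x).fun_mul ((hasDerivAt_const x 1).add h1)).fun_sub
          (((hasDerivAt_const x (1:ℝ)).sub h1).const_mul 2))
      rw [h.deriv]
      have h3 := Real.add_one_le_exp x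
      have h4 := (Real.exp_pos (-x)).le
      have h5 : Real.exp x * Real.exp (-x) = 1 := by rw [← Real.exp_add]; simp
      nlinarith [mul_le_mul_of_nonneg_right h3 h4]
  intro x hx
  have := hmono hx
  simpa using this

/-- The energy penalty `ℰ(T) = (αr + β(e^{-rT} + rT − 1))/(r(1 − e^{-rT}))` for an
exponentially distributed time to event with rate `r > 0` is convex on `(0, ∞)`,
when `α ≥ 0` and `β > 0`. -/
theorem energy_penalty_exponential_convex (r α β : ℝ) (hr : 0 < r) (hα : 0 ≤ α) (hβ : 0 < β) :
    ConvexOn ℝ (Set.Ioi (0 : ℝ))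
      (fun T : ℝ =>
        (α * r + β * (Real.exp (-(r * T)) + r * T - 1)) / (r * (1 - Real.exp (-(r * T))))) := by
  set f1 : ℝ → ℝ := fun T =>
    (β * (1 - Real.exp (-(r*T))) - (α*r + β*r*T) * Real.exp (-(r*T))) / (1 - Real.exp (-(r*T)))^2
    with hf1def
  set f2 : ℝ → ℝ := fun T =>
    r * Real.exp (-(r*T)) * ((α*r + β*r*T) * (1 + Real.exp (-(r*T))) - 2*β*(1 - Real.exp (-(r*T))))
      / (1 - Real.exp (-(r*T)))^3 with hf2def
  have hu : ∀ T : ℝ, HasDerivAt (fun T => Real.exp (-(r*T))) (Real.exp (-(r*T)) * -r) T := by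
    intro T
    have h0 : HasDerivAt (fun T : ℝ => -(r*T)) (-r) T := by
      simpa using ((hasDerivAt_id T).const_mul r).fun_neg
    exact h0.exp
  have hu0 : ∀ T : ℝ, 0 < T → 0 < Real.exp (-(r*T)) := fun T _ => Real.exp_pos _
  have hu1 : ∀ T : ℝ, 0 < T → Real.exp (-(r*T)) < 1 := by
    intro T hT
    apply Real.exp_lt_one_iff.mpr
    nlinarith
  have hA : ∀ T ∈ Set.Ioi (0:ℝ), HasDerivAt
      (fun T : ℝ =>
        (α * r + β * (Real.exp (-(r * T)) + r * T - 1)) / (r * (1 - Real.exp (-(r * T)))))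
      (f1 T) T := by
    intro T hT
    have hT0 : 0 < T := hT
    have hs : (1 : ℝ) - Real.exp (-(r*T)) ≠ 0 := by
      have := hu1 T hT0; linarith
    have hD : r * (1 - Real.exp (-(r*T))) ≠ 0 :=
      mul_ne_zero hr.ne' hs
    have hN : HasDerivAt (fun T : ℝ => α * r + β * (Real.exp (-(r * T)) + r * T - 1))
        (β * (Real.exp (-(r*T)) * -r + r)) T := by
      have : HasDerivAt (fun T : ℝ => Real.exp (-(r * T)) + r * T - 1)
          (Real.exp (-(r*T)) * -r + r) T := by
        simpa using ((hu T).add ((hasDerivAt_id T).const_mul r)).sub_const 1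
      simpa using (this.const_mul β).const_add (α * r)
    have hDd : HasDerivAt (fun T : ℝ => r * (1 - Real.exp (-(r * T))))
        (r * (Real.exp (-(r*T)) * r)) T := by
      have : HasDerivAt (fun T : ℝ => 1 - Real.exp (-(r * T))) (Real.exp (-(r*T)) * r) T := by
        simpa using ((hu T).const_sub 1)
      simpa using this.const_mul r
    have := hN.fun_div hDd hD
    refine this.congr_deriv ?_
    rw [hf1def]
    field_simp
    ring
  have hB : ∀ T ∈ Set.Ioi (0:ℝ), HasDerivAt f1 (f2 T) T := by
    intro T hT
    have hT0 : 0 < T := hT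
    have hs : (1 : ℝ) - Real.exp (-(r*T)) ≠ 0 := by
      have := hu1 T hT0; linarith
    have hQ : ((1 : ℝ) - Real.exp (-(r*T)))^2 ≠ 0 := pow_ne_zero _ hs
    have hP : HasDerivAt (fun T : ℝ => β * (1 - Real.exp (-(r*T))) - (α*r + β*r*T) * Real.exp (-(r*T)))
        (β * (Real.exp (-(r*T)) * r) - ((β*r) * Real.exp (-(r*T)) + (α*r + β*r*T) * (Real.exp (-(r*T)) * -r))) T := by
      have h1 : HasDerivAt (fun T : ℝ => β * (1 - Real.exp (-(r*T)))) (β * (Real.exp (-(r*T)) * r)) T := by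
        simpa using ((hu T).const_sub 1).const_mul β
      have h2 : HasDerivAt (fun T : ℝ => (α*r + β*r*T) * Real.exp (-(r*T)))
          ((β*r) * Real.exp (-(r*T)) + (α*r + β*r*T) * (Real.exp (-(r*T)) * -r)) T := by
        have h3 : HasDerivAt (fun T : ℝ => α*r + β*r*T) (β*r) T := by
          simpa using ((hasDerivAt_id T).const_mul (β*r)).const_add (α*r)
        exact h3.mul (hu T)
      exact h1.sub h2
    have hQd : HasDerivAt (fun T : ℝ => (1 - Real.exp (-(r*T)))^2)
        (2 * (1 - Real.exp (-(r*T))) * (Real.exp (-(r*T)) * r)) T := by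
      have h1 : HasDerivAt (fun T : ℝ => 1 - Real.exp (-(r*T))) (Real.exp (-(r*T)) * r) T := by
        simpa using ((hu T).const_sub 1)
      simpa using h1.fun_pow 2
    have := hP.fun_div hQd hQ
    refine this.congr_deriv ?_
    rw [hf2def]
    field_simp
    ring
  have hint : interior (Set.Ioi (0:ℝ)) = Set.Ioi 0 := interior_Ioi
  apply convexOn_of_hasDerivWithinAt2_nonneg (convex_Ioi 0)
  · intro T hT
    exact (hA T hT).continuousAt.continuousWithinAt
  · intro T hT
    rw [hint] at hT ⊢
    exact (hA T hT).hasDerivWithinAt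
  · intro T hT
    rw [hint] at hT ⊢
    exact (hB T hT).hasDerivWithinAt
  · intro T hT
    rw [hint] at hT
    have hT0 : 0 < T := hT
    have h1 := hu1 T hT0
    have h0 := hu0 T hT0
    have hk := key_ineq (r*T) (by positivity)
    rw [hf2def]
    apply div_nonneg
    · have hkk := mul_le_mul_of_nonneg_left hk hβ.le
      nlinarith [mul_nonneg (mul_nonneg hα hr.le) h0.le, mul_nonneg hα hr.le,
        mul_nonneg (mul_nonneg hr.le h0.le) (sub_nonneg.mpr hkk)]
    · exact pow_nonneg (by linarith) 3
end

section
/- For every real x > 0 and every real c ≥ 0, one has (1 + e^{-x})(x + c) + 2e^{-x} − 2 ≥ 0. -/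
/-!
The expression grows with `c`, so `c = 0` suffices. Multiplied by `e^x` the claim at `c = 0`
becomes `g x ≥ 0` for `g x = (x - 2) e^x + x + 2`, which vanishes at `0` and is monotone because
`g' x = (x - 1) e^x + 1 ≥ 0`, i.e. `1 - x ≤ e^{-x}`.
-/

open Real

lemma sub_one_mul_exp_add_one_nonneg (x : ℝ) : 0 ≤ (x - 1) * exp x + 1 := by
  have h := add_one_le_exp (-x)
  have hexp : exp (-x) * exp x = 1 := by rw [← exp_add, neg_add_cancel, exp_zero]
  nlinarith [exp_pos x]

lemma monotone_sub_two_mul_exp_add_self : Monotone fun x : ℝ ↦ (x - 2) * exp x + x + 2 := by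
  refine monotone_of_hasDerivAt_nonneg (fun x ↦ ?_) sub_one_mul_exp_add_one_nonneg
  exact (((((hasDerivAt_id' x).sub_const 2).mul (hasDerivAt_exp x)).add
    (hasDerivAt_id' x)).add_const 2).congr_deriv (by ring)

lemma two_sub_le_two_add_mul_exp_neg {x : ℝ} (hx : 0 ≤ x) : 2 - x ≤ (2 + x) * exp (-x) := by
  have hg : (0 - 2) * exp 0 + 0 + 2 ≤ (x - 2) * exp x + x + 2 :=
    monotone_sub_two_mul_exp_add_self hx
  have hexp : exp x * exp (-x) = 1 := by rw [← exp_add, add_neg_cancel, exp_zero]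
  rw [exp_zero] at hg
  nlinarith [exp_pos (-x)]

/-- For every real `x > 0` and every real `c ≥ 0`,
`(1 + e^{-x})(x + c) + 2e^{-x} − 2 ≥ 0`. -/
theorem key_inequality (x c : ℝ) (hx : 0 < x) (hc : 0 ≤ c) :
    0 ≤ (1 + Real.exp (-x)) * (x + c) + 2 * Real.exp (-x) - 2 := by
  have hc' : 0 ≤ c * (1 + exp (-x)) := mul_nonneg hc (by positivity)
  nlinarith [two_sub_le_two_add_mul_exp_neg hx.le]
end

section
/- Let λ > 0, α > 0 and β > 0. There exists a unique T* > 0 satisfying e^{λT*} − λT* = (α/β)λ + 1, and this T* is the global minimizer on (0, ∞) of the function ℰ(T) = (αλ + β(e^{-λT} + λT − 1))/(λ(1 − e^{-λT})), i.e. ℰ(T*) ≤ ℰ(T) for all T > 0. -/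
/-!
Put `x = λT`. The function `x ↦ eˣ - x` increases strictly on `[0, ∞)` from the value `1`, so it
takes the value `(α/β)λ + 1 > 1` at exactly one `x* > 0`. Writing `αλ = β(e^{x*} - x* - 1)`, the
numerator of `ℰ` at `x*` factors as `β(e^{x*} - 1)(1 - e^{-x*})`, so `ℰ(T*) = β(e^{x*} - 1)/λ`,
and `ℰ(T*) ≤ ℰ(T)` reduces to the tangent-line bound `e^{x* - x} ≥ 1 + x* - x`.
-/

open Real Set

lemma strictMonoOn_exp_sub_self : StrictMonoOn (fun x : ℝ => exp x - x) (Ici 0) := by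
  intro a (ha : 0 ≤ a) b _ hab
  have hgap : b - a + 1 < exp (b - a) := add_one_lt_exp (sub_ne_zero.mpr hab.ne')
  have hsplit : exp b = exp a * exp (b - a) := by rw [← exp_add, add_sub_cancel]
  nlinarith [one_le_exp ha]

lemma exists_pos_exp_sub_self_eq {c : ℝ} (hc : 1 < c) : ∃ x, 0 < x ∧ exp x - x = c := by
  have hcont : ContinuousOn (fun x : ℝ => exp x - x) (Icc 0 c) := by fun_prop
  have hc_le : c ≤ exp c - c := by nlinarith [quadratic_le_exp_of_nonneg (by linarith : 0 ≤ c)]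
  obtain ⟨x, hx, hxc⟩ :=
    intermediate_value_Icc (by linarith) hcont ⟨by simpa using hc.le, hc_le⟩
  refine ⟨x, lt_of_le_of_ne hx.1 ?_, hxc⟩
  rintro rfl
  simp only [exp_zero, sub_zero] at hxc
  linarith

lemma existsUnique_pos_exp_mul_sub_mul_eq {r c : ℝ} (hr : 0 < r) (hc : 1 < c) :
    ∃! T, 0 < T ∧ exp (r * T) - r * T = c := by
  obtain ⟨x, hx, hxc⟩ := exists_pos_exp_sub_self_eq hc
  refine ⟨x / r, ⟨by positivity, by rwa [mul_div_cancel₀ x hr.ne']⟩, ?_⟩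
  rintro T ⟨hT, hTc⟩
  have hrT : r * T = x :=
    strictMonoOn_exp_sub_self.injOn (mem_Ici.mpr (by positivity)) (mem_Ici.mpr hx.le)
      (hTc.trans hxc.symm)
  rw [eq_div_iff hr.ne', ← hrT, mul_comm]

lemma exp_sub_one_mul_one_sub_exp_neg_le (s x : ℝ) :
    (exp s - 1) * (1 - exp (-x)) ≤ (exp s - s - 1) + (exp (-x) + x - 1) := by
  have htangent : s - x + 1 ≤ exp s * exp (-x) := by
    rw [← exp_add, ← sub_eq_add_neg]
    exact add_one_le_exp _
  nlinarith

lemma one_sub_exp_neg_pos {x : ℝ} (hx : 0 < x) : 0 < 1 - exp (-x) := by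
  simpa using exp_lt_one_iff.mpr (neg_neg_of_pos hx)

/-- The penalty `ℰ(T)`, with `r` for the rate `λ`. -/
noncomputable def samplingPenalty (α β r T : ℝ) : ℝ :=
  (α * r + β * (exp (-(r * T)) + r * T - 1)) / (r * (1 - exp (-(r * T))))

section samplingPenalty

variable {α β r : ℝ}

lemma samplingPenalty_eq {T : ℝ} (hr : 0 < r) (hT : 0 < T)
    (hα : α * r = β * (exp (r * T) - r * T - 1)) :
    samplingPenalty α β r T = β * (exp (r * T) - 1) / r := by
  have hden : 0 < 1 - exp (-(r * T)) := one_sub_exp_neg_pos (by positivity)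
  have hinv : exp (-(r * T)) * exp (r * T) = 1 := by rw [← exp_add, neg_add_cancel, exp_zero]
  rw [samplingPenalty, hα, div_eq_div_iff (by positivity) hr.ne']
  linear_combination (β * r) * hinv

lemma le_samplingPenalty (s : ℝ) {t : ℝ} (hr : 0 < r) (hβ : 0 ≤ β) (ht : 0 < t)
    (hα : α * r = β * (exp s - s - 1)) :
    β * (exp s - 1) / r ≤ samplingPenalty α β r t := by
  have hden : 0 < 1 - exp (-(r * t)) := one_sub_exp_neg_pos (by positivity)
  rw [samplingPenalty, div_le_div_iff₀ hr (by positivity), hα]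
  nlinarith [mul_le_mul_of_nonneg_left (exp_sub_one_mul_one_sub_exp_neg_le s (r * t))
    (mul_nonneg hβ hr.le)]

end samplingPenalty

/-- For `r, α, β > 0` there is a unique `T* > 0` with `e^{rT*} − rT* = (α/β)r + 1`, and this
`T*` is the global minimizer on `(0, ∞)` of
`ℰ(T) = (αr + β(e^{-rT} + rT − 1))/(r(1 − e^{-rT}))`. -/
theorem optimal_sampling_interval_exponential (r α β : ℝ) (hr : 0 < r) (hα : 0 < α)
    (hβ : 0 < β) :
    (∃! T : ℝ, 0 < T ∧ Real.exp (r * T) - r * T = (α / β) * r + 1) ∧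
      ∀ T : ℝ, (0 < T ∧ Real.exp (r * T) - r * T = (α / β) * r + 1) →
        ∀ t : ℝ, 0 < t →
          (α * r + β * (Real.exp (-(r * T)) + r * T - 1)) / (r * (1 - Real.exp (-(r * T))))
            ≤ (α * r + β * (Real.exp (-(r * t)) + r * t - 1))
                / (r * (1 - Real.exp (-(r * t)))) := by
  refine ⟨existsUnique_pos_exp_mul_sub_mul_eq hr (lt_add_of_pos_left 1 (by positivity)), ?_⟩
  rintro T ⟨hT, hTeq⟩ t ht
  have hαr : α * r = β * (exp (r * T) - r * T - 1) := by
    rw [hTeq]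
    field_simp
    ring
  change samplingPenalty α β r T ≤ samplingPenalty α β r t
  rw [samplingPenalty_eq hr hT hαr]
  exact le_samplingPenalty (r * T) hr hβ.le ht hαr
end

section
/- Let σ > 0 and let 𝒯 be a random variable whose law is the Rayleigh distribution with scale σ (density (t/σ²) e^{-t²/(2σ²)} on [0,∞)). For every sampling interval T > 0, the expected number of samples satisfies E[⌈𝒯/T⌉] = Σ_{k=0}^{∞} e^{-k²T²/(2σ²)}. -/
open MeasureTheory Real

/-- The Rayleigh measure with scale `σ`, given by the density
`t ↦ (t/σ²)·e^{-t²/(2σ²)}` on `[0, ∞)` with respect to the Lebesgue measure. -/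
noncomputable def rayleighMeasure (σ : ℝ) : Measure ℝ :=
  MeasureTheory.volume.withDensity
    (fun t => ENNReal.ofReal (if 0 ≤ t then t / σ ^ 2 * Real.exp (-t ^ 2 / (2 * σ ^ 2)) else 0))

open scoped NNReal ENNReal

lemma rayleigh_tail_aux (σ : ℝ) (hσ : 0 < σ) (a : ℝ) (ha : 0 ≤ a) :
    IntegrableOn (fun t => t / σ ^ 2 * Real.exp (-t ^ 2 / (2 * σ ^ 2))) (Set.Ioi a) ∧
    ∫ t in Set.Ioi a, t / σ ^ 2 * Real.exp (-t ^ 2 / (2 * σ ^ 2))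
      = Real.exp (-a ^ 2 / (2 * σ ^ 2)) := by
  have hσ2 : (0:ℝ) < σ ^ 2 := by positivity
  have hderiv : ∀ x ∈ Set.Ici a,
      HasDerivAt (fun t => -Real.exp (-t ^ 2 / (2 * σ ^ 2)))
        (x / σ ^ 2 * Real.exp (-x ^ 2 / (2 * σ ^ 2))) x := by
    intro x _
    have h1 : HasDerivAt (fun t : ℝ => t ^ 2) (2 * x) x := by
      simpa using hasDerivAt_pow 2 x
    have h2 : HasDerivAt (fun t : ℝ => -t ^ 2 / (2 * σ ^ 2)) (-(2 * x) / (2 * σ ^ 2)) x :=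
      h1.neg.div_const _
    have h3 : HasDerivAt (fun t => -Real.exp (-t ^ 2 / (2 * σ ^ 2))) _ x := h2.exp.neg
    convert h3 using 1
    field_simp
  have hpos : ∀ x ∈ Set.Ioi a, 0 ≤ x / σ ^ 2 * Real.exp (-x ^ 2 / (2 * σ ^ 2)) := by
    intro x hx
    have : 0 ≤ x := le_of_lt (lt_of_le_of_lt ha hx)
    positivity
  have htend : Filter.Tendsto (fun t => -Real.exp (-t ^ 2 / (2 * σ ^ 2)))
      Filter.atTop (nhds 0) := by
    have h1 : Filter.Tendsto (fun t : ℝ => -t ^ 2 / (2 * σ ^ 2)) Filter.atTop Filter.atBot := by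
      apply Filter.Tendsto.atBot_div_const (by positivity)
      exact Filter.tendsto_neg_atBot_iff.mpr (Filter.tendsto_pow_atTop (by norm_num))
    have := (Real.tendsto_exp_atBot.comp h1).neg
    simpa using this
  refine ⟨integrableOn_Ioi_deriv_of_nonneg' hderiv hpos htend, ?_⟩
  rw [integral_Ioi_of_hasDerivAt_of_nonneg' hderiv hpos htend]
  ring

/-- For a Rayleigh distributed time to event `𝒯` with scale `σ > 0` and any sampling
interval `T > 0`, the expected number of samples `E[⌈𝒯/T⌉]` equals
`Σ_{k=0}^{∞} e^{-k²T²/(2σ²)}`. -/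
theorem expected_samples_rayleigh (σ T : ℝ) (hσ : 0 < σ) (hT : 0 < T) :
    ∫ t, ((⌈t / T⌉ : ℤ) : ℝ) ∂(rayleighMeasure σ)
      = ∑' k : ℕ, Real.exp (-((k : ℝ) ^ 2 * T ^ 2) / (2 * σ ^ 2)) := by
  have hσ2 : (0:ℝ) < σ ^ 2 := by positivity
  set f : ℝ → ℝ := fun t => t / σ ^ 2 * Real.exp (-t ^ 2 / (2 * σ ^ 2)) with hfdef
  have hfmeas : Measurable f := by fun_prop
  have hfnn : ∀ t, 0 ≤ t → 0 ≤ f t := by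
    intro t ht; simp only [hfdef]; positivity
  set h : ℝ → ℝ := fun t => if 0 ≤ t then f t else 0 with hhdef
  have hhnn : ∀ t, 0 ≤ h t := by
    intro t; simp only [hhdef]; split
    · exact hfnn t ‹_›
    · exact le_refl 0
  have hhmeas : Measurable h := Measurable.ite measurableSet_Ici hfmeas measurable_const
  -- step 1: reduce to a Lebesgue integral
  have step1 : ∫ t, ((⌈t / T⌉ : ℤ) : ℝ) ∂(rayleighMeasure σ)
      = ∫ t, h t * ((⌈t / T⌉ : ℤ) : ℝ) := by
    have : rayleighMeasure σ
        = volume.withDensity (fun t => ((Real.toNNReal (h t) : ℝ≥0) : ℝ≥0∞)) := by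
      simp only [rayleighMeasure, hhdef, hfdef, ENNReal.ofReal]
    rw [this, integral_withDensity_eq_integral_smul (hhmeas.real_toNNReal)]
    congr 1
    ext t
    rw [NNReal.smul_def, Real.coe_toNNReal _ (hhnn t), smul_eq_mul]
  -- the summand functions
  set g : ℕ → ℝ → ℝ := fun k => (Set.Ioi ((k : ℝ) * T)).indicator f with hgdef
  -- pointwise decomposition
  have hpt : ∀ t, h t * ((⌈t / T⌉ : ℤ) : ℝ) = ∑' k : ℕ, g k t := by
    intro t
    by_cases ht : 0 < t
    · have hiff : ∀ k : ℕ, ((k : ℝ) * T < t ↔ k < (⌈t / T⌉).toNat) := by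
        intro k
        rw [← lt_div_iff₀ hT, Int.lt_toNat, Int.lt_ceil]
        norm_num
      have hceil_pos : 0 < ⌈t / T⌉ := Int.ceil_pos.mpr (div_pos ht hT)
      have hsum : ∑' k : ℕ, g k t = ((⌈t / T⌉).toNat : ℝ) * f t := by
        have heq : ∀ k : ℕ, g k t = if k ∈ Finset.range (⌈t / T⌉).toNat then f t else 0 := by
          intro k
          simp only [hgdef, Set.indicator_apply, Set.mem_Ioi, Finset.mem_range, hiff k]
        rw [tsum_eq_sum (s := Finset.range (⌈t / T⌉).toNat)
          (fun k hk => by rw [heq k, if_neg hk])]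
        rw [Finset.sum_congr rfl (fun k hk => by rw [heq k, if_pos hk])]
        simp [Finset.sum_const, nsmul_eq_mul]
      rw [hsum, hhdef]
      simp only [if_pos ht.le]
      rw [mul_comm]
      congr 1
      rw [← Int.cast_natCast, Int.toNat_of_nonneg hceil_pos.le]
    · push_neg at ht
      have hL : h t * ((⌈t / T⌉ : ℤ) : ℝ) = 0 := by
        rcases lt_or_eq_of_le ht with ht' | ht'
        · simp [hhdef, not_le.mpr ht']
        · simp [hhdef, ht', hfdef]
      have hR : ∑' k : ℕ, g k t = 0 := by
        have : ∀ k : ℕ, g k t = 0 := by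
          intro k
          apply Set.indicator_of_notMem
          simp only [Set.mem_Ioi, not_lt]
          exact ht.trans (by positivity)
        simp [this]
      rw [hL, hR]
  -- tail integrals
  have htail : ∀ k : ℕ, ∫ t, g k t = Real.exp (-((k:ℝ)*T) ^ 2 / (2 * σ ^ 2)) := by
    intro k
    have hk : (0:ℝ) ≤ (k:ℝ) * T := by positivity
    rw [hgdef]
    rw [integral_indicator measurableSet_Ioi]
    exact (rayleigh_tail_aux σ hσ ((k:ℝ)*T) hk).2
  have hlint : ∀ k : ℕ, ∫⁻ t, ‖g k t‖₊
      = ENNReal.ofReal (Real.exp (-((k:ℝ)*T) ^ 2 / (2 * σ ^ 2))) := by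
    intro k
    have hk : (0:ℝ) ≤ (k:ℝ) * T := by positivity
    obtain ⟨hint, hval⟩ := rayleigh_tail_aux σ hσ ((k:ℝ)*T) hk
    have : ∀ t, (‖g k t‖₊ : ℝ≥0∞)
        = (Set.Ioi ((k:ℝ)*T)).indicator (fun t => ENNReal.ofReal (f t)) t := by
      intro t
      by_cases hmem : t ∈ Set.Ioi ((k:ℝ)*T)
      · have htnn : 0 ≤ t := le_of_lt (lt_of_le_of_lt hk hmem)
        simp [hgdef, Set.indicator_of_mem hmem, ← Real.enorm_eq_ofReal (hfnn t htnn)]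
        exact (enorm_eq_nnnorm _).symm
      · simp [hgdef, Set.indicator_of_notMem hmem]
    simp_rw [this]
    rw [lintegral_indicator measurableSet_Ioi]
    rw [← ofReal_integral_eq_lintegral_ofReal hint
      (ae_restrict_of_forall_mem measurableSet_Ioi
        (fun t htm => hfnn t (le_of_lt (lt_of_le_of_lt hk htm)))), hval]
  -- summability bound
  set c : ℝ := T ^ 2 / (2 * σ ^ 2) with hcdef
  have hc : 0 < c := by positivity
  have hbound : ∀ k : ℕ, ENNReal.ofReal (Real.exp (-((k:ℝ)*T) ^ 2 / (2 * σ ^ 2)))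
      ≤ (ENNReal.ofReal (Real.exp (-c))) ^ k := by
    intro k
    rw [← ENNReal.ofReal_pow (Real.exp_nonneg _), ← Real.exp_nat_mul]
    apply ENNReal.ofReal_le_ofReal
    apply Real.exp_le_exp.mpr
    have hk2 : (k:ℝ) ≤ (k:ℝ) ^ 2 := by
      exact_mod_cast Nat.le_self_pow two_ne_zero k
    have e1 : -((k:ℝ)*T) ^ 2 / (2 * σ ^ 2) = -((k:ℝ) ^ 2 * c) := by
      rw [hcdef]; field_simp
    have e2 : (k:ℝ) * -c = -((k:ℝ) * c) := by ring
    rw [e1, e2, neg_le_neg_iff]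
    exact mul_le_mul_of_nonneg_right hk2 hc.le
  have hmeasg : ∀ k : ℕ, AEStronglyMeasurable (g k) volume := fun k =>
    ((hfmeas.indicator measurableSet_Ioi).aestronglyMeasurable)
  have hne : ∑' k : ℕ, ∫⁻ t, ‖g k t‖₊ ≠ ⊤ := by
    rw [tsum_congr hlint]
    refine ne_top_of_le_ne_top ?_ (ENNReal.tsum_le_tsum hbound)
    rw [ENNReal.tsum_geometric]
    have hr1 : ENNReal.ofReal (Real.exp (-c)) < 1 := by
      rw [show (1 : ℝ≥0∞) = ENNReal.ofReal 1 by simp]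
      exact ENNReal.ofReal_lt_ofReal_iff_of_nonneg (Real.exp_nonneg _) |>.mpr
        (Real.exp_lt_one_iff.mpr (by linarith))
    exact ENNReal.inv_ne_top.mpr (tsub_pos_of_lt hr1).ne'
  rw [step1]
  rw [integral_congr_ae (Filter.Eventually.of_forall hpt)]
  rw [integral_tsum hmeasg hne]
  apply tsum_congr
  intro k
  rw [htail k]
  congr 1
  ring
end

section
/- Let σ > 0 and let 𝒯 be a random variable whose law is the Rayleigh distribution with scale σ (density (t/σ²) e^{-t²/(2σ²)} on [0,∞)). For every sampling interval T > 0, the expected wait time satisfies E[⌈𝒯/T⌉·T − 𝒯] = T · Σ_{k=0}^{∞} e^{-k²T²/(2σ²)} − σ√(π/2). -/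
open MeasureTheory Real

open Set Filter Topology

lemma rayleigh_integrableOn_id_mul (σ : ℝ) (hσ : 0 < σ) :
    IntegrableOn (fun t : ℝ => t / σ ^ 2 * Real.exp (-t ^ 2 / (2 * σ ^ 2)) * t) (Ioi 0) := by
  have hb : (0:ℝ) < (2 * σ ^ 2)⁻¹ := by positivity
  have h : IntegrableOn (fun x : ℝ => 1 / σ ^ 2 * (x ^ (2:ℝ) * Real.exp (-(2 * σ ^ 2)⁻¹ * x ^ 2)))
      (Ioi 0) :=
    (integrableOn_rpow_mul_exp_neg_mul_sq hb (s := 2) (by norm_num)).const_mul (1 / σ ^ 2)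
  refine h.congr_fun (fun x hx => ?_) measurableSet_Ioi
  have hx0 : (0:ℝ) < x := hx
  dsimp only
  rw [Real.rpow_two, show -(2 * σ ^ 2)⁻¹ * x ^ 2 = -x ^ 2 / (2 * σ ^ 2) by field_simp]
  ring

lemma rayleigh_integrableOn (σ : ℝ) (hσ : 0 < σ) :
    IntegrableOn (fun t : ℝ => t / σ ^ 2 * Real.exp (-t ^ 2 / (2 * σ ^ 2))) (Ioi 0) := by
  have hb : (0:ℝ) < (2 * σ ^ 2)⁻¹ := by positivity
  have h : IntegrableOn (fun x : ℝ => 1 / σ ^ 2 * (x * Real.exp (-(2 * σ ^ 2)⁻¹ * x ^ 2)))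
      (Ioi 0) := ((integrable_mul_exp_neg_mul_sq hb).integrableOn).const_mul (1 / σ ^ 2)
  refine h.congr_fun (fun x hx => ?_) measurableSet_Ioi
  dsimp only
  rw [show -(2 * σ ^ 2)⁻¹ * x ^ 2 = -x ^ 2 / (2 * σ ^ 2) by field_simp]
  ring

lemma rayleigh_mean (σ : ℝ) (hσ : 0 < σ) :
    ∫ t in Ioi (0:ℝ), t / σ ^ 2 * Real.exp (-t ^ 2 / (2 * σ ^ 2)) * t
      = σ * Real.sqrt (π / 2) := by
  have hb : (0:ℝ) < (2 * σ ^ 2)⁻¹ := by positivity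
  have hv : ∀ x : ℝ, HasDerivAt (fun t : ℝ => -Real.exp (-t ^ 2 / (2 * σ ^ 2)))
      (x / σ ^ 2 * Real.exp (-x ^ 2 / (2 * σ ^ 2))) x := by
    intro x
    have h1 : HasDerivAt (fun t : ℝ => -t ^ 2 / (2 * σ ^ 2)) (-(2 * x) / (2 * σ ^ 2)) x := by
      simpa [neg_div] using ((hasDerivAt_pow 2 x).div_const (2 * σ ^ 2)).fun_neg
    have h2 := (h1.exp).fun_neg
    refine h2.congr_deriv ?_
    field_simp
  calc ∫ t in Ioi (0:ℝ), t / σ ^ 2 * Real.exp (-t ^ 2 / (2 * σ ^ 2)) * t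
      = ∫ x in Ioi (0:ℝ), x * (x / σ ^ 2 * Real.exp (-x ^ 2 / (2 * σ ^ 2))) := by
        refine setIntegral_congr_fun measurableSet_Ioi (fun x _ => by ring)
    _ = 0 - 0 - ∫ x in Ioi (0:ℝ), 1 * -Real.exp (-x ^ 2 / (2 * σ ^ 2)) := by
        refine integral_Ioi_mul_deriv_eq_deriv_mul (fun x _ => hasDerivAt_id x)
          (fun x _ => hv x) ?_ ?_ ?_ ?_
        · exact (rayleigh_integrableOn_id_mul σ hσ).congr_fun (fun x _ => by
            simp only [Pi.mul_apply]; ring) measurableSet_Ioi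
        · have hn : IntegrableOn (fun t : ℝ => -Real.exp (-(2 * σ ^ 2)⁻¹ * t ^ 2))
              (Ioi 0) := ((integrable_exp_neg_mul_sq hb).integrableOn).neg
          exact hn.congr_fun (fun x _ => by
            simp only [Pi.mul_apply, one_mul,
              show -(2 * σ ^ 2)⁻¹ * x ^ 2 = -x ^ 2 / (2 * σ ^ 2) by field_simp]) measurableSet_Ioi
        · have hc : Continuous (fun x : ℝ => x * -Real.exp (-x ^ 2 / (2 * σ ^ 2))) := by
            fun_prop
          exact (hc.tendsto' 0 0 (by simp)).mono_left nhdsWithin_le_nhds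
        · have hhalf : Tendsto (fun x : ℝ => Real.exp (-(1/2) * x)) atTop (𝓝 0) := by
            refine Real.tendsto_exp_atBot.comp ?_
            have h0 : Tendsto (fun x : ℝ => (1/2 : ℝ) * x) atTop atTop :=
              Tendsto.const_mul_atTop (by norm_num) tendsto_id
            have := tendsto_neg_atTop_atBot.comp h0
            refine this.congr (fun x => ?_)
            simp [Function.comp, neg_mul]
          have h1 : Tendsto (fun x : ℝ => x ^ (1:ℝ) * Real.exp (-(2 * σ ^ 2)⁻¹ * x ^ 2))
              atTop (𝓝 0) :=
            (rpow_mul_exp_neg_mul_sq_isLittleO_exp_neg hb 1).trans_tendsto hhalf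
          have h2 := h1.neg
          rw [neg_zero] at h2
          refine h2.congr (fun x => ?_)
          simp only [Pi.mul_apply, Real.rpow_one,
            show -(2 * σ ^ 2)⁻¹ * x ^ 2 = -x ^ 2 / (2 * σ ^ 2) by field_simp]
          ring
    _ = Real.sqrt (π / (2 * σ ^ 2)⁻¹) / 2 := by
        rw [show (fun x : ℝ => (1:ℝ) * -Real.exp (-x ^ 2 / (2 * σ ^ 2))) =
            (fun x : ℝ => -Real.exp (-(2 * σ ^ 2)⁻¹ * x ^ 2)) from funext fun x => by
              rw [one_mul, show -(2 * σ ^ 2)⁻¹ * x ^ 2 = -x ^ 2 / (2 * σ ^ 2) by field_simp]]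
        rw [integral_neg, integral_gaussian_Ioi]
        ring
    _ = σ * Real.sqrt (π / 2) := by
        rw [show π / (2 * σ ^ 2)⁻¹ = σ ^ 2 * (2 * π) by field_simp]
        rw [Real.sqrt_mul (sq_nonneg σ), Real.sqrt_sq hσ.le]
        rw [show (2 * π : ℝ) = 4 * (π / 2) by ring, Real.sqrt_mul (by norm_num) (π / 2)]
        rw [show (4:ℝ) = 2 ^ 2 by norm_num, Real.sqrt_sq (by norm_num)]
        ring

-- decomposition of Ioi 0
lemma ioi_eq_iUnion (T : ℝ) (hT : 0 < T) :
    Ioi (0:ℝ) = ⋃ k : ℕ, Ioc ((k:ℝ) * T) (((k:ℝ) + 1) * T) := by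
  ext t
  simp only [mem_iUnion, mem_Ioc, mem_Ioi]
  constructor
  · intro ht
    have h1 : (0:ℤ) < ⌈t / T⌉ := by
      rw [Int.lt_ceil]
      exact_mod_cast div_pos ht hT
    refine ⟨(⌈t / T⌉ - 1).toNat, ?_, ?_⟩
    · have hc : ((⌈t / T⌉ : ℝ) - 1) < t / T := by
        have := Int.ceil_lt_add_one (t / T)
        linarith
      have hcast : (((⌈t / T⌉ - 1).toNat : ℤ) : ℝ) = (⌈t / T⌉ : ℝ) - 1 := by
        rw [Int.toNat_of_nonneg (by omega)]; push_cast; ring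
      calc ((((⌈t / T⌉ - 1).toNat : ℕ)) : ℝ) * T = ((⌈t / T⌉ : ℝ) - 1) * T := by
            rw [← hcast]; norm_cast
        _ < (t / T) * T := by exact mul_lt_mul_of_pos_right hc hT
        _ = t := by field_simp
    · have hc : t / T ≤ (⌈t / T⌉ : ℝ) := Int.le_ceil _
      have hcast : (((⌈t / T⌉ - 1).toNat : ℕ) : ℝ) + 1 = (⌈t / T⌉ : ℝ) := by
        have : (((⌈t / T⌉ - 1).toNat : ℤ) : ℝ) = (⌈t / T⌉ : ℝ) - 1 := by
          rw [Int.toNat_of_nonneg (by omega)]; push_cast; ring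
        push_cast at this ⊢
        linarith
      rw [hcast]
      calc t = (t / T) * T := by field_simp
        _ ≤ (⌈t / T⌉ : ℝ) * T := mul_le_mul_of_nonneg_right hc hT.le
  · rintro ⟨k, hk1, _⟩
    have : (0:ℝ) ≤ (k:ℝ) * T := by positivity
    linarith

-- ceil on the pieces
lemma ceil_on_piece (T : ℝ) (hT : 0 < T) (k : ℕ) {t : ℝ}
    (ht : t ∈ Ioc ((k:ℝ) * T) (((k:ℝ) + 1) * T)) :
    ((⌈t / T⌉ : ℤ) : ℝ) = (k:ℝ) + 1 := by
  have h1 : (k:ℝ) < t / T := (lt_div_iff₀ hT).mpr (by linarith [ht.1])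
  have h2 : t / T ≤ (k:ℝ) + 1 := (div_le_iff₀ hT).mpr (by linarith [ht.2])
  have : ⌈t / T⌉ = (k:ℤ) + 1 := by
    rw [Int.ceil_eq_iff]
    constructor
    · push_cast; linarith
    · push_cast; linarith
  rw [this]; push_cast; ring

-- integral of the density over a piece
lemma piece_integral (σ T : ℝ) (hσ : 0 < σ) (hT : 0 < T) (k : ℕ) :
    ∫ t in Ioc ((k:ℝ) * T) (((k:ℝ) + 1) * T), t / σ ^ 2 * Real.exp (-t ^ 2 / (2 * σ ^ 2))
      = Real.exp (-((k:ℝ) ^ 2 * T ^ 2) / (2 * σ ^ 2))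
        - Real.exp (-(((k:ℝ) + 1) ^ 2 * T ^ 2) / (2 * σ ^ 2)) := by
  have hle : (k:ℝ) * T ≤ ((k:ℝ) + 1) * T := by nlinarith [Nat.cast_nonneg (α := ℝ) k]
  have hv : ∀ x : ℝ, HasDerivAt (fun t : ℝ => -Real.exp (-t ^ 2 / (2 * σ ^ 2)))
      (x / σ ^ 2 * Real.exp (-x ^ 2 / (2 * σ ^ 2))) x := by
    intro x
    have h1 : HasDerivAt (fun t : ℝ => -t ^ 2 / (2 * σ ^ 2)) (-(2 * x) / (2 * σ ^ 2)) x := by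
      simpa [neg_div] using ((hasDerivAt_pow 2 x).div_const (2 * σ ^ 2)).fun_neg
    have h2 := (h1.exp).fun_neg
    refine h2.congr_deriv ?_
    field_simp
  rw [← intervalIntegral.integral_of_le hle]
  rw [intervalIntegral.integral_eq_sub_of_hasDerivAt (fun x _ => hv x)
    (Continuous.intervalIntegrable (by fun_prop) _ _)]
  have e1 : -(((k:ℝ) + 1) * T) ^ 2 / (2 * σ ^ 2) = -(((k:ℝ) + 1) ^ 2 * T ^ 2) / (2 * σ ^ 2) := by
    ring
  have e2 : -((k:ℝ) * T) ^ 2 / (2 * σ ^ 2) = -((k:ℝ) ^ 2 * T ^ 2) / (2 * σ ^ 2) := by ring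
  rw [e1, e2]
  ring

-- integrability of the ceiling integrand
lemma ceil_integrable (σ T : ℝ) (hσ : 0 < σ) (hT : 0 < T) :
    IntegrableOn
      (fun t : ℝ => t / σ ^ 2 * Real.exp (-t ^ 2 / (2 * σ ^ 2)) * (((⌈t / T⌉ : ℤ) : ℝ) * T))
      (Ioi 0) := by
  have hbound : IntegrableOn
      (fun t : ℝ => t / σ ^ 2 * Real.exp (-t ^ 2 / (2 * σ ^ 2)) * t
        + t / σ ^ 2 * Real.exp (-t ^ 2 / (2 * σ ^ 2)) * T) (Ioi 0) :=
    (rayleigh_integrableOn_id_mul σ hσ).add ((rayleigh_integrableOn σ hσ).mul_const T)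
  refine Integrable.mono' hbound ?_ ?_
  · apply Measurable.aestronglyMeasurable
    apply Measurable.mul (by fun_prop)
    exact ((measurable_from_top.comp (measurable_id.div_const T).ceil).mul_const T)
  · filter_upwards [ae_restrict_mem measurableSet_Ioi] with t ht
    have ht0 : (0:ℝ) < t := ht
    have hρ : 0 ≤ t / σ ^ 2 * Real.exp (-t ^ 2 / (2 * σ ^ 2)) := by positivity
    have hc1 : 0 ≤ ((⌈t / T⌉ : ℤ) : ℝ) * T := by
      have : (0:ℤ) < ⌈t / T⌉ := by
        rw [Int.lt_ceil]; exact_mod_cast div_pos ht0 hT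
      have : (0:ℝ) ≤ ((⌈t / T⌉ : ℤ) : ℝ) := by exact_mod_cast this.le
      positivity
    have hc2 : ((⌈t / T⌉ : ℤ) : ℝ) * T ≤ t + T := by
      have h := Int.ceil_lt_add_one (t / T)
      have : ((⌈t / T⌉ : ℤ) : ℝ) * T ≤ (t / T + 1) * T :=
        mul_le_mul_of_nonneg_right (by linarith) hT.le
      calc ((⌈t / T⌉ : ℤ) : ℝ) * T ≤ (t / T + 1) * T := this
        _ = t + T := by field_simp
    rw [Real.norm_eq_abs, abs_of_nonneg (by positivity)]
    calc t / σ ^ 2 * Real.exp (-t ^ 2 / (2 * σ ^ 2)) * (((⌈t / T⌉ : ℤ) : ℝ) * T)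
        ≤ t / σ ^ 2 * Real.exp (-t ^ 2 / (2 * σ ^ 2)) * (t + T) :=
          mul_le_mul_of_nonneg_left hc2 hρ
      _ = t / σ ^ 2 * Real.exp (-t ^ 2 / (2 * σ ^ 2)) * t
          + t / σ ^ 2 * Real.exp (-t ^ 2 / (2 * σ ^ 2)) * T := by ring

lemma abel_tsum (σ T : ℝ) (hσ : 0 < σ) (hT : 0 < T) :
    HasSum (fun k : ℕ => ((k:ℝ) + 1) *
        (Real.exp (-((k:ℝ) ^ 2 * T ^ 2) / (2 * σ ^ 2))
          - Real.exp (-(((k:ℝ) + 1) ^ 2 * T ^ 2) / (2 * σ ^ 2))))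
      (∑' k : ℕ, Real.exp (-((k:ℝ) ^ 2 * T ^ 2) / (2 * σ ^ 2))) := by
  have h2σ : (0:ℝ) < 2 * σ ^ 2 := by positivity
  set A : ℕ → ℝ := fun k => Real.exp (-((k:ℝ) ^ 2 * T ^ 2) / (2 * σ ^ 2)) with hA
  have hsucc : ∀ k : ℕ, Real.exp (-(((k:ℝ) + 1) ^ 2 * T ^ 2) / (2 * σ ^ 2)) = A (k + 1) := by
    intro k; simp only [hA]; push_cast; ring_nf
  have hanti : ∀ k : ℕ, A (k + 1) ≤ A k := by
    intro k
    apply Real.exp_le_exp.mpr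
    rw [div_le_div_iff₀ h2σ h2σ]
    push_cast
    have hnum : -(((k:ℝ) + 1) ^ 2 * T ^ 2) ≤ -((k:ℝ) ^ 2 * T ^ 2) := by
      nlinarith [mul_nonneg (show (0:ℝ) ≤ 2 * (k:ℝ) + 1 by positivity) (sq_nonneg T)]
    exact mul_le_mul_of_nonneg_right hnum h2σ.le
  have hAsum : Summable A := by
    have hr : Real.exp (-(T ^ 2 / (2 * σ ^ 2))) < 1 := by
      rw [Real.exp_lt_one_iff]
      have : (0:ℝ) < T ^ 2 / (2 * σ ^ 2) := by positivity
      linarith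
    refine Summable.of_nonneg_of_le (fun k => (Real.exp_pos _).le) (fun k => ?_)
      (summable_geometric_of_lt_one (Real.exp_pos _).le hr)
    rw [← Real.exp_nat_mul]
    apply Real.exp_le_exp.mpr
    have hk : (k:ℝ) ≤ (k:ℝ) ^ 2 := by
      exact_mod_cast Nat.cast_le.mpr (Nat.le_self_pow two_ne_zero k)
    rw [show (k:ℝ) * -(T ^ 2 / (2 * σ ^ 2)) = -((k:ℝ) * T ^ 2) / (2 * σ ^ 2) by ring]
    rw [div_le_div_iff₀ h2σ h2σ]
    have hnum : -((k:ℝ) ^ 2 * T ^ 2) ≤ -((k:ℝ) * T ^ 2) := by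
      have := mul_le_mul_of_nonneg_right hk (sq_nonneg T)
      linarith
    exact mul_le_mul_of_nonneg_right hnum h2σ.le
  have key : ∀ N : ℕ, ∑ k ∈ Finset.range N, ((k:ℝ) + 1) * (A k - A (k + 1))
      = (∑ k ∈ Finset.range N, A k) - (N:ℝ) * A N := by
    intro N
    induction N with
    | zero => simp
    | succ n ih =>
        rw [Finset.sum_range_succ, ih, Finset.sum_range_succ]
        push_cast
        ring
  have hNA : Tendsto (fun N : ℕ => (N:ℝ) * A N) atTop (𝓝 0) := by
    have hb : (0:ℝ) < T ^ 2 / (2 * σ ^ 2) := by positivity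
    have hhalf : Tendsto (fun x : ℝ => Real.exp (-(1/2) * x)) atTop (𝓝 0) := by
      refine Real.tendsto_exp_atBot.comp ?_
      have h0 : Tendsto (fun x : ℝ => (1/2 : ℝ) * x) atTop atTop :=
        Tendsto.const_mul_atTop (by norm_num) tendsto_id
      have := tendsto_neg_atTop_atBot.comp h0
      refine this.congr (fun x => ?_)
      simp [Function.comp, neg_mul]
    have h1 : Tendsto (fun x : ℝ => x ^ (1:ℝ) * Real.exp (-(T ^ 2 / (2 * σ ^ 2)) * x ^ 2))
        atTop (𝓝 0) :=
      (rpow_mul_exp_neg_mul_sq_isLittleO_exp_neg hb 1).trans_tendsto hhalf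
    have h2 := h1.comp tendsto_natCast_atTop_atTop (α := ℕ)
    refine h2.congr (fun n => ?_)
    simp only [Function.comp_apply, Real.rpow_one, hA]
    congr 1
    ring
  have hnn : ∀ k : ℕ, 0 ≤ ((k:ℝ) + 1) * (A k - A (k + 1)) := by
    intro k
    have h1 : (0:ℝ) ≤ (k:ℝ) + 1 := by positivity
    have h2 : 0 ≤ A k - A (k + 1) := by linarith [hanti k]
    positivity
  have hgoal : HasSum (fun k : ℕ => ((k:ℝ) + 1) * (A k - A (k + 1))) (∑' k, A k) := by
    rw [hasSum_iff_tendsto_nat_of_nonneg hnn]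
    have := (hAsum.hasSum.tendsto_sum_nat).sub hNA
    rw [sub_zero] at this
    exact this.congr (fun n => (key n).symm)
  refine HasSum.congr_fun hgoal (fun k => ?_) -- maybe wrong name
  rw [hsucc k]

lemma ceil_integral (σ T : ℝ) (hσ : 0 < σ) (hT : 0 < T) :
    ∫ t in Ioi (0:ℝ), t / σ ^ 2 * Real.exp (-t ^ 2 / (2 * σ ^ 2)) * (((⌈t / T⌉ : ℤ) : ℝ) * T)
      = T * ∑' k : ℕ, Real.exp (-((k:ℝ) ^ 2 * T ^ 2) / (2 * σ ^ 2)) := by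
  have hd : Pairwise (Function.onFun Disjoint
      fun k : ℕ => Ioc ((k:ℝ) * T) (((k:ℝ) + 1) * T)) := by
    intro i j hij
    apply Set.Ioc_disjoint_Ioc.mpr
    rcases hij.lt_or_gt with h | h
    · have h1 : (i:ℝ) + 1 ≤ (j:ℝ) := by exact_mod_cast h
      refine le_trans (min_le_left _ _) (le_trans ?_ (le_max_right _ _))
      exact mul_le_mul_of_nonneg_right h1 hT.le
    · have h1 : (j:ℝ) + 1 ≤ (i:ℝ) := by exact_mod_cast h
      refine le_trans (min_le_right _ _) (le_trans ?_ (le_max_left _ _))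
      exact mul_le_mul_of_nonneg_right h1 hT.le
  have hfi := ceil_integrable σ T hσ hT
  rw [ioi_eq_iUnion T hT] at hfi ⊢
  rw [integral_iUnion (fun k => measurableSet_Ioc) hd hfi]
  have hpiece : ∀ k : ℕ,
      ∫ t in Ioc ((k:ℝ) * T) (((k:ℝ) + 1) * T),
          t / σ ^ 2 * Real.exp (-t ^ 2 / (2 * σ ^ 2)) * (((⌈t / T⌉ : ℤ) : ℝ) * T)
        = T * (((k:ℝ) + 1) * (Real.exp (-((k:ℝ) ^ 2 * T ^ 2) / (2 * σ ^ 2))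
            - Real.exp (-(((k:ℝ) + 1) ^ 2 * T ^ 2) / (2 * σ ^ 2)))) := by
    intro k
    rw [setIntegral_congr_fun measurableSet_Ioc (g :=
        fun t => t / σ ^ 2 * Real.exp (-t ^ 2 / (2 * σ ^ 2)) * (((k:ℝ) + 1) * T))
        (fun t ht => by rw [ceil_on_piece T hT k ht])]
    rw [integral_mul_const, piece_integral σ T hσ hT k]
    ring
  rw [tsum_congr hpiece, tsum_mul_left, (abel_tsum σ T hσ hT).tsum_eq]
/-- For a Rayleigh distributed time to event `𝒯` with scale `σ > 0` and any sampling
interval `T > 0`, the expected wait `E[⌈𝒯/T⌉·T − 𝒯]` equals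
`T·Σ_{k=0}^{∞} e^{-k²T²/(2σ²)} − σ√(π/2)`. -/
theorem expected_wait_rayleigh (σ T : ℝ) (hσ : 0 < σ) (hT : 0 < T) :
    ∫ t, (((⌈t / T⌉ : ℤ) : ℝ) * T - t) ∂(rayleighMeasure σ)
      = T * (∑' k : ℕ, Real.exp (-((k : ℝ) ^ 2 * T ^ 2) / (2 * σ ^ 2)))
          - σ * Real.sqrt (π / 2) := by
  have hρnn : ∀ t : ℝ,
      0 ≤ (if 0 ≤ t then t / σ ^ 2 * Real.exp (-t ^ 2 / (2 * σ ^ 2)) else 0) := by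
    intro t
    split
    · next h => exact mul_nonneg (div_nonneg h (sq_nonneg σ)) (Real.exp_pos _).le
    · exact le_refl 0
  have hm : Measurable fun t : ℝ =>
      Real.toNNReal (if 0 ≤ t then t / σ ^ 2 * Real.exp (-t ^ 2 / (2 * σ ^ 2)) else 0) := by
    apply Measurable.real_toNNReal
    exact Measurable.ite measurableSet_Ici (by fun_prop) measurable_const
  rw [rayleighMeasure]
  rw [show (fun t : ℝ => ENNReal.ofReal
        (if 0 ≤ t then t / σ ^ 2 * Real.exp (-t ^ 2 / (2 * σ ^ 2)) else 0))
      = (fun t : ℝ => ((Real.toNNReal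
        (if 0 ≤ t then t / σ ^ 2 * Real.exp (-t ^ 2 / (2 * σ ^ 2)) else 0) : NNReal) : ENNReal))
      from rfl]
  rw [integral_withDensity_eq_integral_smul hm]
  have heq : (fun t : ℝ =>
      (Real.toNNReal (if 0 ≤ t then t / σ ^ 2 * Real.exp (-t ^ 2 / (2 * σ ^ 2)) else 0))
        • ((((⌈t / T⌉ : ℤ) : ℝ)) * T - t))
      = fun t : ℝ => (if 0 ≤ t then t / σ ^ 2 * Real.exp (-t ^ 2 / (2 * σ ^ 2)) else 0)
        * ((((⌈t / T⌉ : ℤ) : ℝ)) * T - t) := by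
    funext t
    rw [NNReal.smul_def, Real.coe_toNNReal _ (hρnn t), smul_eq_mul]
  rw [heq]
  rw [← setIntegral_eq_integral_of_forall_compl_eq_zero (s := Ioi 0) (fun t ht => ?_)]; swap
  · have ht0 : t ≤ 0 := by simpa using ht
    rcases lt_or_eq_of_le ht0 with h | h
    · rw [if_neg (not_le.mpr h), zero_mul]
    · rw [h, if_pos le_rfl]
      norm_num
  rw [setIntegral_congr_fun measurableSet_Ioi (g := fun t : ℝ =>
      t / σ ^ 2 * Real.exp (-t ^ 2 / (2 * σ ^ 2)) * ((((⌈t / T⌉ : ℤ) : ℝ)) * T)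
      - t / σ ^ 2 * Real.exp (-t ^ 2 / (2 * σ ^ 2)) * t)
      (fun t ht => by rw [if_pos (le_of_lt ht)]; ring)]
  rw [integral_sub (ceil_integrable σ T hσ hT) (rayleigh_integrableOn_id_mul σ hσ)]
  rw [ceil_integral σ T hσ hT, rayleigh_mean σ hσ]
end

section
/- Let σ > 0. The function f(t) = Σ_{k=0}^{∞} e^{-k²t²/(2σ²)} is convex on the interval (0, ∞). -/
open Real Set

lemma sumexp {c : ℝ} (hc : 0 < c) :
    Summable (fun k : ℕ => Real.exp (-(c * (k:ℝ)^2))) := by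
  refine Summable.of_nonneg_of_le (fun k => (Real.exp_pos _).le) (fun k => ?_)
    ((Real.summable_exp_nat_mul_iff (a := -c)).mpr (by linarith))
  apply Real.exp_le_exp.mpr
  rcases Nat.eq_zero_or_pos k with h | h
  · subst h; simp
  · have h1 : (1:ℝ) ≤ k := by exact_mod_cast h
    nlinarith [hc.le, sq_nonneg ((k:ℝ) - 1)]

lemma sumexp_int {c : ℝ} (hc : 0 < c) :
    Summable (fun n : ℤ => Real.exp (-(c * (n:ℝ)^2))) := by
  refine Summable.of_nat_of_neg_add_one ?_ ?_
  · exact (sumexp hc).congr (fun n => by push_cast; ring_nf)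
  · refine Summable.of_nonneg_of_le (fun k => (Real.exp_pos _).le) (fun k => ?_) (sumexp hc)
    apply Real.exp_le_exp.mpr
    push_cast
    nlinarith [Nat.cast_nonneg (α := ℝ) k]

lemma convexOn_tsum {ι : Type*} {s : Set ℝ} (hs : Convex ℝ s) {f : ι → ℝ → ℝ}
    (hconv : ∀ i, ConvexOn ℝ s (f i)) (hsum : ∀ t ∈ s, Summable (fun i => f i t)) :
    ConvexOn ℝ s (fun t => ∑' i, f i t) := by
  refine ⟨hs, fun x hx y hy a b ha hb hab => ?_⟩
  have hxy : a • x + b • y ∈ s := hs hx hy ha hb hab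
  have h1 : Summable fun i => a * f i x := (hsum x hx).mul_left a
  have h2 : Summable fun i => b * f i y := (hsum y hy).mul_left b
  simp only [smul_eq_mul]
  calc ∑' i, f i (a * x + b * y) ≤ ∑' i, (a * f i x + b * f i y) := by
        refine Summable.tsum_le_tsum (fun i => ?_) (by simpa using hsum _ hxy) (h1.add h2)
        simpa using (hconv i).2 hx hy ha hb hab
    _ = a * ∑' i, f i x + b * ∑' i, f i y := by
        rw [Summable.tsum_add h1 h2, tsum_mul_left, tsum_mul_left]

lemma convexA {d s0 : ℝ} (hs0 : 0 < s0) (hd : 0 < d) (hcond : 1 ≤ 2 * d * s0^2) :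
    ConvexOn ℝ (Set.Ioi s0) (fun t : ℝ => Real.exp (-(d * t^2))) := by
  have key : ∀ t : ℝ, HasDerivAt (fun t : ℝ => Real.exp (-(d * t^2)))
      (Real.exp (-(d * t^2)) * (-(2*d*t))) t := by
    intro t
    have h1 : HasDerivAt (fun t : ℝ => -(d * t^2)) (-(2*d*t)) t := by
      have := ((hasDerivAt_pow 2 t).const_mul d).neg
      refine this.congr_deriv ?_
      push_cast; ring
    exact h1.exp
  have key2 : ∀ t : ℝ, HasDerivAt (fun t : ℝ => Real.exp (-(d * t^2)) * (-(2*d*t)))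
      (Real.exp (-(d * t^2)) * (4*d^2*t^2 - 2*d)) t := by
    intro t
    have h2 : HasDerivAt (fun t : ℝ => -(2*d*t)) (-(2*d)) t := by
      have := ((hasDerivAt_id t).const_mul (2*d)).neg
      exact this.congr_deriv (by ring)
    have := (key t).mul h2
    refine this.congr_deriv ?_
    ring
  refine convexOn_of_hasDerivWithinAt2_nonneg (convex_Ioi s0)
    (f' := fun t : ℝ => Real.exp (-(d * t^2)) * (-(2*d*t)))
    (f'' := fun t : ℝ => Real.exp (-(d * t^2)) * (4*d^2*t^2 - 2*d))
    (fun x _ => (key x).continuousAt.continuousWithinAt)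
    (fun x _ => (key x).hasDerivWithinAt)
    (fun x _ => (key2 x).hasDerivWithinAt) (fun x hx => ?_)
  rw [interior_Ioi] at hx
  have hx' : s0 < x := hx
  have hx2 : s0^2 ≤ x^2 := by nlinarith
  have h1 : 1 ≤ 2*d*x^2 := le_trans hcond (by nlinarith)
  have h4 : 0 ≤ 4*d^2*x^2 - 2*d := by nlinarith [mul_le_mul_of_nonneg_left h1 hd.le]
  positivity

lemma convexB {γ b : ℝ} (hb : 0 < b) (hγ : γ = 0 ∨ 5 * b^2 ≤ 2 * γ) :
    ConvexOn ℝ (Set.Ioo (0:ℝ) b) (fun t : ℝ => t⁻¹ * Real.exp (-γ * (t⁻¹)^2)) := by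
  have key : ∀ t : ℝ, t ≠ 0 → HasDerivAt (fun t : ℝ => t⁻¹ * Real.exp (-γ * (t⁻¹)^2))
      (Real.exp (-γ * (t⁻¹)^2) * (2*γ*(t⁻¹)^4 - (t⁻¹)^2)) t := by
    intro t ht
    have hinv := hasDerivAt_inv ht
    have hinner : HasDerivAt (fun t : ℝ => -γ * (t⁻¹)^2) (2*γ*(t⁻¹)^3) t := by
      have := (hinv.pow 2).const_mul (-γ)
      refine this.congr_deriv ?_
      rw [← inv_pow]
      push_cast; ring
    have := hinv.mul hinner.exp
    refine this.congr_deriv ?_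
    rw [← inv_pow]
    ring
  have key2 : ∀ t : ℝ, t ≠ 0 →
      HasDerivAt (fun t : ℝ => Real.exp (-γ * (t⁻¹)^2) * (2*γ*(t⁻¹)^4 - (t⁻¹)^2))
      (Real.exp (-γ * (t⁻¹)^2) * (4*γ^2*(t⁻¹)^7 - 10*γ*(t⁻¹)^5 + 2*(t⁻¹)^3)) t := by
    intro t ht
    have hinv := hasDerivAt_inv ht
    have hinner : HasDerivAt (fun t : ℝ => -γ * (t⁻¹)^2) (2*γ*(t⁻¹)^3) t := by
      have := (hinv.pow 2).const_mul (-γ)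
      refine this.congr_deriv ?_
      rw [← inv_pow]
      push_cast; ring
    have hg : HasDerivAt (fun t : ℝ => 2*γ*(t⁻¹)^4 - (t⁻¹)^2)
        (-8*γ*(t⁻¹)^5 + 2*(t⁻¹)^3) t := by
      have := ((hinv.pow 4).const_mul (2*γ)).sub (hinv.pow 2)
      refine this.congr_deriv ?_
      rw [← inv_pow]
      push_cast; ring
    have := hinner.exp.mul hg
    refine this.congr_deriv ?_
    ring
  refine convexOn_of_hasDerivWithinAt2_nonneg (convex_Ioo 0 b)
    (f' := fun t : ℝ => Real.exp (-γ * (t⁻¹)^2) * (2*γ*(t⁻¹)^4 - (t⁻¹)^2))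
    (f'' := fun t : ℝ => Real.exp (-γ * (t⁻¹)^2) * (4*γ^2*(t⁻¹)^7 - 10*γ*(t⁻¹)^5 + 2*(t⁻¹)^3))
    (fun x hx => (key x (ne_of_gt hx.1)).continuousAt.continuousWithinAt)
    (fun x hx => by rw [interior_Ioo] at hx; exact (key x (ne_of_gt hx.1)).hasDerivWithinAt)
    (fun x hx => by rw [interior_Ioo] at hx; exact (key2 x (ne_of_gt hx.1)).hasDerivWithinAt)
    (fun x hx => ?_)
  rw [interior_Ioo] at hx
  obtain ⟨hx0, hxb⟩ := hx
  set u := x⁻¹ with hu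
  have hu0 : 0 < u := inv_pos.mpr hx0
  have hub : 1 ≤ u * b := by
    rw [hu, inv_mul_eq_div, le_div_iff₀ hx0]
    linarith
  have h4 : 0 ≤ 4*γ^2*u^7 - 10*γ*u^5 + 2*u^3 := by
    rcases hγ with h0 | h5
    · rw [h0]; nlinarith [pow_pos hu0 3, pow_pos hu0 7]
    · have hγ0 : 0 ≤ γ := by nlinarith
      have h1 : 5 ≤ 2*γ*u^2 := by
        nlinarith [mul_le_mul_of_nonneg_right h5 (sq_nonneg u),
          mul_le_mul_of_nonneg_left hub (le_trans zero_le_one hub)]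
      have h2 : 0 ≤ 2*γ * u^5 * (2*γ*u^2 - 5) :=
        mul_nonneg (mul_nonneg (by linarith) (pow_pos hu0 5).le) (by linarith)
      nlinarith [pow_pos hu0 3]
  positivity

lemma slope_trans {f : ℝ → ℝ} {p q r s : ℝ} (hpq : p < q) (hqr : q < r)
    (h1 : s ≤ (f q - f p)/(q - p)) (h2 : s ≤ (f r - f q)/(r - q)) :
    s ≤ (f r - f p)/(r - p) := by
  rw [le_div_iff₀ (by linarith : (0:ℝ) < q - p)] at h1
  rw [le_div_iff₀ (by linarith : (0:ℝ) < r - q)] at h2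
  rw [le_div_iff₀ (by linarith : (0:ℝ) < r - p)]
  nlinarith

lemma slope_trans' {f : ℝ → ℝ} {p q r s : ℝ} (hpq : p < q) (hqr : q < r)
    (h1 : (f q - f p)/(q - p) ≤ s) (h2 : (f r - f q)/(r - q) ≤ s) :
    (f r - f p)/(r - p) ≤ s := by
  rw [div_le_iff₀ (by linarith : (0:ℝ) < q - p)] at h1
  rw [div_le_iff₀ (by linarith : (0:ℝ) < r - q)] at h2
  rw [div_le_iff₀ (by linarith : (0:ℝ) < r - p)]
  nlinarith

lemma glue {f : ℝ → ℝ} {a b : ℝ} (ha : 0 < a) (hab : a < b)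
    (h1 : ConvexOn ℝ (Ioo 0 b) f) (h2 : ConvexOn ℝ (Ioi a) f) :
    ConvexOn ℝ (Ioi 0) f := by
  refine convexOn_of_slope_mono_adjacent (convex_Ioi 0) ?_
  intro x y z hx hz hxy hyz
  rw [mem_Ioi] at hx hz
  by_cases hzb : z < b
  · exact h1.slope_mono_adjacent ⟨hx, by linarith⟩ ⟨by linarith, hzb⟩ hxy hyz
  push_neg at hzb
  by_cases hxa : a < x
  · exact h2.slope_mono_adjacent (mem_Ioi.mpr hxa) (mem_Ioi.mpr (by linarith)) hxy hyz
  push_neg at hxa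
  set w1 := a + (b - a)/3 with hw1
  set w2 := a + 2*(b - a)/3 with hw2
  have haw1 : a < w1 := by rw [hw1]; linarith
  have hw12 : w1 < w2 := by rw [hw1, hw2]; linarith
  have hw2b : w2 < b := by rw [hw2]; linarith
  have hw10 : 0 < w1 := by linarith
  rcases le_or_gt y a with hya | hya
  · -- y ≤ a < w1 < w2 < b ≤ z
    have A1 : (f y - f x)/(y - x) ≤ (f w2 - f y)/(w2 - y) :=
      h1.slope_mono_adjacent ⟨hx, by linarith⟩ ⟨by linarith, hw2b⟩ hxy (by linarith)
    have A2a : (f y - f x)/(y - x) ≤ (f w1 - f y)/(w1 - y) :=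
      h1.slope_mono_adjacent ⟨hx, by linarith⟩ ⟨hw10, by linarith⟩ hxy (by linarith)
    have A2b : (f w1 - f y)/(w1 - y) ≤ (f w2 - f w1)/(w2 - w1) :=
      h1.slope_mono_adjacent ⟨by linarith, by linarith⟩ ⟨by linarith, hw2b⟩ (by linarith) hw12
    have A2c : (f w2 - f w1)/(w2 - w1) ≤ (f z - f w2)/(z - w2) :=
      h2.slope_mono_adjacent (mem_Ioi.mpr haw1) (mem_Ioi.mpr (by linarith)) hw12 (by linarith)
    exact slope_trans (by linarith) (by linarith) A1 ((A2a.trans A2b).trans A2c)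
  rcases lt_or_ge y b with hyb | hyb
  · -- a < y < b
    set q := (y + b)/2 with hq
    have hyq : y < q := by rw [hq]; linarith
    have hqb : q < b := by rw [hq]; linarith
    have B1 : (f y - f x)/(y - x) ≤ (f q - f y)/(q - y) :=
      h1.slope_mono_adjacent ⟨hx, by linarith⟩ ⟨by linarith, hqb⟩ hxy hyq
    have B2 : (f q - f y)/(q - y) ≤ (f z - f q)/(z - q) :=
      h2.slope_mono_adjacent (mem_Ioi.mpr hya) (mem_Ioi.mpr (by linarith)) hyq (by linarith)
    exact slope_trans hyq (by linarith) B1 (B1.trans B2)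
  · -- b ≤ y
    have C1 : (f y - f w1)/(y - w1) ≤ (f z - f y)/(z - y) :=
      h2.slope_mono_adjacent (mem_Ioi.mpr haw1) (mem_Ioi.mpr (by linarith)) (by linarith) hyz
    have C2a : (f w1 - f x)/(w1 - x) ≤ (f w2 - f w1)/(w2 - w1) :=
      h1.slope_mono_adjacent ⟨hx, by linarith⟩ ⟨by linarith, hw2b⟩ (by linarith) hw12
    have C2b : (f w2 - f w1)/(w2 - w1) ≤ (f y - f w2)/(y - w2) :=
      h2.slope_mono_adjacent (mem_Ioi.mpr haw1) (mem_Ioi.mpr (by linarith)) hw12 (by linarith)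
    have C2c : (f y - f w2)/(y - w2) ≤ (f z - f y)/(z - y) :=
      h2.slope_mono_adjacent (mem_Ioi.mpr (by linarith : a < w2)) (mem_Ioi.mpr (by linarith)) (by linarith) hyz
    exact slope_trans' (by linarith : x < w1) (by linarith) ((C2a.trans C2b).trans C2c) C1

lemma theta_id {σ t : ℝ} (hσ : 0 < σ) (ht : 0 < t) :
    ∑' k : ℕ, Real.exp (-((k : ℝ)^2 * t^2) / (2*σ^2)) =
    1/2 + (Real.sqrt (2*π) * σ / 2) *
      ∑' n : ℤ, (t⁻¹ * Real.exp (-(2*π^2*σ^2*(n:ℝ)^2) * (t⁻¹)^2)) := by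
  have hπ := Real.pi_pos
  have hc1 : 0 < t^2/(2*σ^2) := by positivity
  have hterm : ∀ x : ℝ, Real.exp (-(t^2/(2*σ^2) * x^2)) = Real.exp (-(x^2 * t^2) / (2*σ^2)) := by
    intro x; congr 1; ring
  have hS : Summable (fun k : ℕ => Real.exp (-((k:ℝ)^2 * t^2) / (2*σ^2))) :=
    (sumexp hc1).congr (fun k => hterm k)
  set S := ∑' k : ℕ, Real.exp (-((k:ℝ)^2 * t^2) / (2*σ^2)) with hSdef
  set g : ℤ → ℝ := fun n => Real.exp (-((n:ℝ)^2 * t^2) / (2*σ^2)) with hg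
  have hg1 : Summable (fun n : ℕ => g ↑n) := hS.congr (fun n => by simp [hg])
  have hgsh : ∀ n : ℕ, g (-(↑n+1)) = Real.exp (-((((n:ℝ))+1)^2 * t^2) / (2*σ^2)) := by
    intro n; simp only [hg]; push_cast; ring_nf
  have hg2 : Summable (fun n : ℕ => g (-(↑n+1))) := by
    refine Summable.of_nonneg_of_le (fun k => by positivity) (fun k => ?_) hS
    rw [hgsh k]
    apply Real.exp_le_exp.mpr
    apply div_le_div_of_nonneg_right ?_ (by positivity)
    · nlinarith [sq_nonneg t, Nat.cast_nonneg (α := ℝ) k, sq_nonneg ((k:ℝ)*t)]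
  have hZ : ∑' n : ℤ, g n = 2 * S - 1 := by
    rw [tsum_of_nat_of_neg_add_one hg1 hg2]
    have e1 : ∑' n : ℕ, g ↑n = S := tsum_congr (fun n => by simp [hg])
    have e2 : ∑' n : ℕ, g (-(↑n+1)) = S - 1 := by
      have h0 := Summable.tsum_eq_zero_add hS
      have : ∑' n : ℕ, g (-(↑n+1)) =
          ∑' n : ℕ, Real.exp (-(((n:ℝ)+1)^2 * t^2) / (2*σ^2)) := tsum_congr (fun n => hgsh n)
      rw [this]
      have h00 : Real.exp (-(((0:ℕ):ℝ)^2 * t^2) / (2*σ^2)) = 1 := by norm_num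
      have : ∑' n : ℕ, Real.exp (-(((n:ℝ)+1)^2 * t^2) / (2*σ^2)) =
          ∑' n : ℕ, Real.exp (-((((n+1:ℕ)):ℝ)^2 * t^2) / (2*σ^2)) :=
        tsum_congr (fun n => by push_cast; ring_nf)
      rw [this]
      rw [h00] at h0
      rw [← hSdef] at h0
      linarith
    rw [e1, e2]; ring
  -- theta transformation
  set a : ℝ := t^2/(2*π*σ^2) with hadef
  have ha : 0 < a := by positivity
  have hga : (fun n : ℤ => g n) = fun n : ℤ => Real.exp (-π * a * (n:ℝ)^2) := by
    funext n
    simp only [hg, hadef]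
    congr 1
    field_simp
  have htheta := Real.tsum_exp_neg_mul_int_sq ha
  have hsq2pi : Real.sqrt (2*π) ^ 2 = 2*π := Real.sq_sqrt (by positivity)
  have hsqrt : a ^ ((1:ℝ)/2) = t / (Real.sqrt (2*π) * σ) := by
    rw [← Real.sqrt_eq_rpow]
    have : a = (t / (Real.sqrt (2*π) * σ))^2 := by
      rw [div_pow, mul_pow, hsq2pi, hadef]
    rw [this, Real.sqrt_sq (by positivity)]
  have hE : ∀ n : ℤ, Real.exp (-π/a * (n:ℝ)^2) =
      Real.exp (-(2*π^2*σ^2*(n:ℝ)^2) * (t⁻¹)^2) := by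
    have h1 : -π/a = -(2*π^2*σ^2) * (t⁻¹)^2 := by
      rw [hadef]
      field_simp
    intro n
    rw [h1]
    congr 1
    ring
  have key : 2 * S - 1 = Real.sqrt (2*π) * σ * t⁻¹ *
      ∑' n : ℤ, Real.exp (-(2*π^2*σ^2*(n:ℝ)^2) * (t⁻¹)^2) := by
    rw [← hZ]
    rw [show (∑' n : ℤ, g n) = ∑' n : ℤ, Real.exp (-π * a * (n:ℝ)^2) by rw [hga]]
    rw [htheta, hsqrt]
    rw [tsum_congr hE]
    rw [one_div, inv_div]
    ring
  rw [tsum_mul_left]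
  set X := ∑' n : ℤ, Real.exp (-(2*π^2*σ^2*(n:ℝ)^2) * (t⁻¹)^2) with hX
  ring_nf at key ⊢
  linarith [key]

lemma ConvexOn.congr'' {s : Set ℝ} {f g : ℝ → ℝ} (hf : ConvexOn ℝ s f)
    (h : ∀ x ∈ s, f x = g x) : ConvexOn ℝ s g :=
  ⟨hf.1, fun x hx y hy a b ha hb hab => by
    rw [← h _ hx, ← h _ hy, ← h _ (hf.1 hx hy ha hb hab)]
    exact hf.2 hx hy ha hb hab⟩

/-- For `σ > 0`, the function `f(t) = Σ_{k=0}^{∞} e^{-k²t²/(2σ²)}` is convex on `(0, ∞)`. -/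
theorem theta_sum_convex (σ : ℝ) (hσ : 0 < σ) :
    ConvexOn ℝ (Set.Ioi (0 : ℝ))
      (fun t : ℝ => ∑' k : ℕ, Real.exp (-((k : ℝ) ^ 2 * t ^ 2) / (2 * σ ^ 2))) := by
  have hπ := Real.pi_pos
  have h2 : ConvexOn ℝ (Ioi σ)
      (fun t : ℝ => ∑' k : ℕ, Real.exp (-((k:ℝ)^2 * t^2) / (2*σ^2))) := by
    refine convexOn_tsum (convex_Ioi σ) (fun k => ?_) (fun t ht => ?_)
    · rcases Nat.eq_zero_or_pos k with rfl | hk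
      · have he : (fun t : ℝ => Real.exp (-(((0:ℕ):ℝ)^2 * t^2) / (2*σ^2))) = fun _ => (1:ℝ) := by
          funext t; norm_num
        rw [he]
        exact convexOn_const 1 (convex_Ioi σ)
      · have hk1 : (1:ℝ) ≤ (k:ℝ) := by exact_mod_cast hk
        have hshape : (fun t : ℝ => Real.exp (-((k:ℝ)^2 * t^2) / (2*σ^2)))
            = fun t : ℝ => Real.exp (-((k:ℝ)^2/(2*σ^2) * t^2)) := by
          funext t; congr 1; ring
        rw [hshape]
        refine convexA hσ (by positivity) ?_
        have he : 2 * ((k:ℝ)^2/(2*σ^2)) * σ^2 = (k:ℝ)^2 := by field_simp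
        rw [he]
        nlinarith
    · have h0 : σ < t := ht
      have h0' : (0:ℝ) < t := lt_trans hσ h0
      have hc : 0 < t^2/(2*σ^2) := by positivity
      exact (sumexp hc).congr (fun k => by congr 1; ring)
  have hC : 0 ≤ Real.sqrt (2*π) * σ / 2 := by positivity
  have hGcore : ConvexOn ℝ (Ioo (0:ℝ) (2*σ))
      (fun t => ∑' n : ℤ, (t⁻¹ * Real.exp (-(2*π^2*σ^2*(n:ℝ)^2) * (t⁻¹)^2))) := by
    refine convexOn_tsum (convex_Ioo 0 (2*σ)) (fun n => ?_) (fun t ht => ?_)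
    · refine convexB (by positivity) ?_
      rcases eq_or_ne n 0 with rfl | hn
      · left; norm_num
      · right
        have hn0 : (1:ℤ) ≤ |n| := Int.one_le_abs (by simpa using hn)
        have hn1 : (1:ℝ) ≤ |(n:ℝ)| := by
          rw [← Int.cast_abs]
          exact_mod_cast hn0
        have hn2 : (1:ℝ) ≤ (n:ℝ)^2 := by nlinarith [sq_abs (n:ℝ)]
        have hπ2 : (9:ℝ) ≤ π^2 := by nlinarith [Real.pi_gt_three]
        nlinarith [mul_le_mul hπ2 hn2 (by norm_num) (by positivity), sq_nonneg σ]
    · have h0 : 0 < t := ht.1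
      have hc : 0 < 2*π^2*σ^2*(t⁻¹)^2 := by positivity
      refine ((sumexp_int hc).mul_left t⁻¹).congr (fun n => ?_)
      congr 2
      ring
  have hG : ConvexOn ℝ (Ioo (0:ℝ) (2*σ))
      (fun t => 1/2 + (Real.sqrt (2*π) * σ / 2) *
        ∑' n : ℤ, (t⁻¹ * Real.exp (-(2*π^2*σ^2*(n:ℝ)^2) * (t⁻¹)^2))) := by
    have := (convexOn_const (1/2 : ℝ) (convex_Ioo (0:ℝ) (2*σ))).add (hGcore.smul hC)
    simpa [Pi.add_def, smul_eq_mul] using this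
  have h1 : ConvexOn ℝ (Ioo (0:ℝ) (2*σ))
      (fun t : ℝ => ∑' k : ℕ, Real.exp (-((k:ℝ)^2 * t^2) / (2*σ^2))) :=
    hG.congr'' (fun x hx => (theta_id hσ hx.1).symm)
  exact glue hσ (by linarith) h1 h2
end

section
/- Let σ > 0 and let 𝒯 be a random variable whose law is the Rayleigh distribution with scale σ (density (t/σ²) e^{-t²/(2σ²)} on [0,∞)). For every sampling interval T > 0 and offset δ > 0, the expected number of samples under offset sampling satisfies E[1 + ⌈max(𝒯 − δ, 0)/T⌉] = 1 + Σ_{k=0}^{∞} e^{-(kT + δ)²/(2σ²)}. -/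
open MeasureTheory Real

open Set Filter
open scoped ENNReal

lemma rayleigh_hasDerivAt (σ : ℝ) (hσ : 0 < σ) (x : ℝ) :
    HasDerivAt (fun t : ℝ => -Real.exp (-t ^ 2 / (2 * σ ^ 2)))
      (x / σ ^ 2 * Real.exp (-x ^ 2 / (2 * σ ^ 2))) x := by
  have h0 : HasDerivAt (fun t : ℝ => -t ^ 2 / (2 * σ ^ 2)) (-(2 * x) / (2 * σ ^ 2)) x := by
    simpa using ((hasDerivAt_pow 2 x).neg.div_const (2 * σ ^ 2))
  have h1 : HasDerivAt (fun t : ℝ => -Real.exp (-t ^ 2 / (2 * σ ^ 2))) _ x := h0.exp.neg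
  convert h1 using 1
  have hσ2 : σ ^ 2 ≠ 0 := by positivity
  field_simp

lemma rayleigh_tendsto (σ : ℝ) (hσ : 0 < σ) :
    Tendsto (fun t : ℝ => -Real.exp (-t ^ 2 / (2 * σ ^ 2))) atTop (nhds 0) := by
  have h1 : Tendsto (fun t : ℝ => -t ^ 2 / (2 * σ ^ 2)) atTop atBot := by
    apply Tendsto.atBot_div_const (by positivity)
    exact tendsto_neg_atBot_iff.mpr (tendsto_pow_atTop two_ne_zero)
  have := (Real.tendsto_exp_atBot.comp h1).neg
  simpa using this

lemma rayleigh_tail (σ : ℝ) (hσ : 0 < σ) (a : ℝ) (ha : 0 ≤ a) :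
    rayleighMeasure σ (Set.Ioi a) = ENNReal.ofReal (Real.exp (-a ^ 2 / (2 * σ ^ 2))) := by
  have hmeas : Measurable (fun t : ℝ =>
      ENNReal.ofReal (if 0 ≤ t then t / σ ^ 2 * Real.exp (-t ^ 2 / (2 * σ ^ 2)) else 0)) := by
    apply Measurable.ennreal_ofReal
    exact Measurable.ite measurableSet_Ici (by fun_prop) measurable_const
  rw [rayleighMeasure, withDensity_apply _ measurableSet_Ioi]
  have hcong : ∀ᵐ t ∂(volume.restrict (Set.Ioi a)),
      ENNReal.ofReal (if 0 ≤ t then t / σ ^ 2 * Real.exp (-t ^ 2 / (2 * σ ^ 2)) else 0)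
        = ENNReal.ofReal (t / σ ^ 2 * Real.exp (-t ^ 2 / (2 * σ ^ 2))) := by
    filter_upwards [ae_restrict_mem measurableSet_Ioi] with t ht
    rw [if_pos (ha.trans (le_of_lt ht))]
  rw [lintegral_congr_ae hcong]
  have hderiv : ∀ x ∈ Set.Ici a, HasDerivAt (fun t : ℝ => -Real.exp (-t ^ 2 / (2 * σ ^ 2)))
      (x / σ ^ 2 * Real.exp (-x ^ 2 / (2 * σ ^ 2))) x := fun x _ => rayleigh_hasDerivAt σ hσ x
  have hpos : ∀ x ∈ Set.Ioi a, 0 ≤ x / σ ^ 2 * Real.exp (-x ^ 2 / (2 * σ ^ 2)) := by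
    intro x hx
    have hx0 : 0 ≤ x := ha.trans (le_of_lt hx)
    positivity
  have hint : IntegrableOn (fun x : ℝ => x / σ ^ 2 * Real.exp (-x ^ 2 / (2 * σ ^ 2)))
      (Set.Ioi a) :=
    integrableOn_Ioi_deriv_of_nonneg' hderiv hpos (rayleigh_tendsto σ hσ)
  have hval : ∫ x in Set.Ioi a, x / σ ^ 2 * Real.exp (-x ^ 2 / (2 * σ ^ 2))
      = Real.exp (-a ^ 2 / (2 * σ ^ 2)) := by
    have := integral_Ioi_of_hasDerivAt_of_nonneg' hderiv hpos (rayleigh_tendsto σ hσ)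
    simpa using this
  rw [← ofReal_integral_eq_lintegral_ofReal hint
    ((ae_restrict_mem measurableSet_Ioi).mono hpos), hval]

lemma rayleigh_univ (σ : ℝ) (hσ : 0 < σ) : rayleighMeasure σ Set.univ = 1 := by
  have h1 : rayleighMeasure σ (Set.Ioi 0) = 1 := by
    rw [rayleigh_tail σ hσ 0 le_rfl]
    norm_num
  have h2 : rayleighMeasure σ (Set.Iic 0) = 0 := by
    rw [rayleighMeasure, withDensity_apply _ measurableSet_Iic]
    have hcong : ∀ᵐ t ∂(volume.restrict (Set.Iic 0)),
        ENNReal.ofReal (if 0 ≤ t then t / σ ^ 2 * Real.exp (-t ^ 2 / (2 * σ ^ 2)) else 0)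
          = 0 := by
      filter_upwards [ae_restrict_mem measurableSet_Iic] with t ht
      have ht' : t ≤ 0 := ht
      rcases lt_or_eq_of_le ht' with h | h
      · rw [if_neg (not_le.mpr h)]; simp
      · rw [h]; simp
    rw [lintegral_congr_ae hcong, lintegral_zero]
  have := measure_add_measure_compl (μ := rayleighMeasure σ) (measurableSet_Ioi (a := (0:ℝ)))
  rw [Set.compl_Ioi, h1, h2] at this
  simpa using this.symm

lemma summable_rayleigh_tail (σ T δ : ℝ) (hσ : 0 < σ) (hT : 0 < T) (hδ : 0 < δ) :
    Summable (fun k : ℕ => Real.exp (-((k : ℝ) * T + δ) ^ 2 / (2 * σ ^ 2))) := by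
  have hc : (0:ℝ) < 2 * σ ^ 2 := by positivity
  have hr1 : Real.exp (-(T * δ) / σ ^ 2) < 1 := by
    rw [Real.exp_lt_one_iff]
    have : (0:ℝ) < T * δ := by positivity
    have hσ2 : (0:ℝ) < σ ^ 2 := by positivity
    exact div_neg_of_neg_of_pos (by linarith) hσ2
  refine Summable.of_nonneg_of_le (fun k => (Real.exp_pos _).le) (fun k => ?_)
    ((summable_geometric_of_lt_one (Real.exp_nonneg _) hr1).mul_left
      (Real.exp (-δ ^ 2 / (2 * σ ^ 2))))
  rw [← Real.exp_nat_mul, ← Real.exp_add, Real.exp_le_exp]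
  have hσ2 : (0:ℝ) < σ ^ 2 := by positivity
  have hk : (0:ℝ) ≤ (k:ℝ) := Nat.cast_nonneg k
  have hrhs : -δ ^ 2 / (2 * σ ^ 2) + (k : ℝ) * (-(T * δ) / σ ^ 2)
      = (-δ ^ 2 - 2 * (k : ℝ) * T * δ) / (2 * σ ^ 2) := by
    field_simp; ring
  rw [hrhs]
  have key : -((k : ℝ) * T + δ) ^ 2 ≤ -δ ^ 2 - 2 * (k : ℝ) * T * δ := by nlinarith [sq_nonneg ((k:ℝ) * T)]
  gcongr

lemma count_eq (T δ : ℝ) (hT : 0 < T) (hδ : 0 < δ) (t : ℝ) :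
    ENNReal.ofReal ((⌈max (t - δ) 0 / T⌉ : ℤ) : ℝ)
      = ∑' k : ℕ, Set.indicator (Set.Ioi ((k : ℝ) * T + δ)) (fun _ => (1 : ℝ≥0∞)) t := by
  have hcnn : (0:ℤ) ≤ ⌈max (t - δ) 0 / T⌉ :=
    Int.ceil_nonneg (div_nonneg (le_max_right _ _) hT.le)
  set m : ℕ := (⌈max (t - δ) 0 / T⌉).toNat with hm
  have hmz : (⌈max (t - δ) 0 / T⌉ : ℤ) = (m : ℤ) := (Int.toNat_of_nonneg hcnn).symm
  have key : ∀ k : ℕ, ((k : ℝ) * T + δ < t ↔ k < m) := by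
    intro k
    rcases le_or_gt t δ with ht | ht
    · have h0 : max (t - δ) 0 = 0 := max_eq_right (by linarith)
      have hm0 : m = 0 := by simp [hm, h0]
      constructor
      · intro h
        have : (0:ℝ) ≤ (k:ℝ) * T := by positivity
        linarith
      · intro h; omega
    · have h0 : max (t - δ) 0 = t - δ := max_eq_left (by linarith)
      have h1 : (k : ℝ) * T + δ < t ↔ (k : ℝ) < (t - δ) / T := by
        rw [lt_div_iff₀ hT]
        constructor <;> intro <;> nlinarith
      have h2 : (k : ℝ) < (t - δ) / T ↔ (k : ℤ) < ⌈(t - δ) / T⌉ := by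
        rw [Int.lt_ceil]; push_cast; rfl
      have h3 : (k : ℤ) < ⌈(t - δ) / T⌉ ↔ k < m := by
        rw [hm, h0]; exact Int.lt_toNat.symm
      rw [h1, h2, ← h3]
  have hind : ∀ k : ℕ,
      Set.indicator (Set.Ioi ((k : ℝ) * T + δ)) (fun _ => (1 : ℝ≥0∞)) t
        = if k < m then (1 : ℝ≥0∞) else 0 := by
    intro k
    by_cases h : (k : ℝ) * T + δ < t
    · rw [Set.indicator_of_mem (by exact h), if_pos ((key k).mp h)]
    · rw [Set.indicator_of_notMem (by exact h), if_neg (fun hk => h ((key k).mpr hk))]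
  rw [tsum_congr hind]
  rw [tsum_eq_sum (s := Finset.range m) (fun k hk => if_neg (by simpa using hk))]
  have : ∀ k ∈ Finset.range m, (if k < m then (1 : ℝ≥0∞) else 0) = 1 := by
    intro k hk; rw [if_pos (Finset.mem_range.mp hk)]
  rw [Finset.sum_congr rfl this, Finset.sum_const, Finset.card_range, hmz]
  push_cast
  simp [ENNReal.ofReal_natCast]

/-- For a Rayleigh distributed time to event with scale `σ > 0`, sampling interval `T > 0`
and offset `δ > 0`, the expected number of samples under offset sampling equals
`1 + Σ_{k=0}^{∞} e^{-(kT + δ)²/(2σ²)}`. -/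
theorem expected_samples_offset_rayleigh (σ T δ : ℝ) (hσ : 0 < σ) (hT : 0 < T) (hδ : 0 < δ) :
    ∫ t, (1 + ((⌈max (t - δ) 0 / T⌉ : ℤ) : ℝ)) ∂(rayleighMeasure σ)
      = 1 + ∑' k : ℕ, Real.exp (-((k : ℝ) * T + δ) ^ 2 / (2 * σ ^ 2)) := by
  set μ := rayleighMeasure σ with hμ
  have hfnn : ∀ t : ℝ, (0:ℝ) ≤ ((⌈max (t - δ) 0 / T⌉ : ℤ) : ℝ) := by
    intro t
    exact_mod_cast Int.ceil_nonneg (div_nonneg (le_max_right _ _) hT.le)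
  have hnn : ∀ t : ℝ, (0:ℝ) ≤ 1 + ((⌈max (t - δ) 0 / T⌉ : ℤ) : ℝ) := fun t => by
    have := hfnn t; linarith
  have hmeas : Measurable (fun t : ℝ => 1 + ((⌈max (t - δ) 0 / T⌉ : ℤ) : ℝ)) := by
    apply measurable_const.add
    exact (measurable_from_top (f := fun n : ℤ => (n : ℝ))).comp
      (((measurable_id.sub_const δ).max measurable_const).div_const T).ceil
  rw [integral_eq_lintegral_of_nonneg_ae (ae_of_all _ hnn) hmeas.aestronglyMeasurable]
  have hsum := summable_rayleigh_tail σ T δ hσ hT hδ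
  have hL : ∫⁻ t, ENNReal.ofReal (1 + ((⌈max (t - δ) 0 / T⌉ : ℤ) : ℝ)) ∂μ
      = ENNReal.ofReal (1 + ∑' k : ℕ, Real.exp (-((k : ℝ) * T + δ) ^ 2 / (2 * σ ^ 2))) := by
    have step1 : ∀ t : ℝ, ENNReal.ofReal (1 + ((⌈max (t - δ) 0 / T⌉ : ℤ) : ℝ))
        = 1 + ENNReal.ofReal ((⌈max (t - δ) 0 / T⌉ : ℤ) : ℝ) := by
      intro t
      rw [ENNReal.ofReal_add zero_le_one (hfnn t), ENNReal.ofReal_one]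
    rw [lintegral_congr step1, lintegral_add_left measurable_const]
    rw [lintegral_one, rayleigh_univ σ hσ]
    have step2 : ∫⁻ t, ENNReal.ofReal ((⌈max (t - δ) 0 / T⌉ : ℤ) : ℝ) ∂μ
        = ∑' k : ℕ, μ (Set.Ioi ((k : ℝ) * T + δ)) := by
      rw [lintegral_congr (count_eq T δ hT hδ)]
      rw [lintegral_tsum (fun k =>
        (measurable_const.indicator measurableSet_Ioi).aemeasurable)]
      exact tsum_congr fun k => lintegral_indicator_one measurableSet_Ioi
    rw [step2]
    have step3 : ∀ k : ℕ, μ (Set.Ioi ((k : ℝ) * T + δ))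
        = ENNReal.ofReal (Real.exp (-((k : ℝ) * T + δ) ^ 2 / (2 * σ ^ 2))) := by
      intro k
      exact rayleigh_tail σ hσ _ (by positivity)
    rw [tsum_congr step3, ← ENNReal.ofReal_tsum_of_nonneg (fun k => (Real.exp_pos _).le) hsum]
    rw [ENNReal.ofReal_add zero_le_one (tsum_nonneg fun k => (Real.exp_pos _).le),
      ENNReal.ofReal_one]
  rw [hμ] at hL
  rw [hL, ENNReal.toReal_ofReal]
  have : (0:ℝ) ≤ ∑' k : ℕ, Real.exp (-((k : ℝ) * T + δ) ^ 2 / (2 * σ ^ 2)) :=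
    tsum_nonneg fun k => (Real.exp_pos _).le
  linarith
end
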